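/- arXiv:2208.10355 — 6 statements merged into one kernel-verified Lean document; each statement's English description precedes it below -/
import Mathlib

section
/- For every Schwartz function f on ℝⁿ, every x ∈ ℝⁿ, and each choice of sign ±, there exists an entire function G : ℂ → ℂ such that G(α) = (P_±^α f)(x) for every α with Re α > 0, and G(0) = (Pf)(x), the parabolic Radon transform of f at x. -/
open MeasureTheory Complex

noncomputable section

/-- ℝⁿ realized as ℝ^{n-1} × ℝ, points written x = (x', xₙ). -/
abbrev Rn (n : ℕ) : Type := EuclideanSpace ℝ (Fin (n - 1)) × ℝ

/-- (t)₊^λ = exp(λ log t) for t > 0 (σ = true), (t)₋^λ = exp(λ log(−t)) for t < 0 (σ = false). -/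
def ppow (σ : Bool) (t : ℝ) (l : ℂ) : ℂ :=
  if σ then (if 0 < t then Complex.exp (l * Real.log t) else 0)
  else (if t < 0 then Complex.exp (l * Real.log (-t)) else 0)

/-- The parabolic fractional integral P_±^α f. -/
def parP (n : ℕ) (σ : Bool) (α : ℂ) (f : Rn n → ℂ) (x : Rn n) : ℂ :=
  (1 / Complex.Gamma α) * ∫ y : Rn n, ppow σ (y.2 - ‖y.1‖ ^ 2) (α - 1) * f (x - y)

/-- The parabolic Radon transform P f. -/
def parRadon (n : ℕ) (f : Rn n → ℂ) (x : Rn n) : ℂ :=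
  ∫ y' : EuclideanSpace ℝ (Fin (n - 1)), f (x.1 - y', x.2 - ‖y'‖ ^ 2)

open Set Filter Topology Real

namespace PPEaux

variable {n : ℕ}

/-- the marginal integral -/
def gI (n : ℕ) (x₁ : EuclideanSpace ℝ (Fin (n-1))) (c ε : ℝ)
    (u : SchwartzMap (Rn n) ℂ) (t : ℝ) : ℂ :=
  ∫ y' : EuclideanSpace ℝ (Fin (n-1)), u (x₁ - y', c - ‖y'‖ ^ 2 - ε * t)

lemma decay1 (u : SchwartzMap (Rn n) ℂ) (j k : ℕ) :
    ∃ C : ℝ, 0 ≤ C ∧ ∀ (w : EuclideanSpace ℝ (Fin (n-1))) (s : ℝ),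
      (1 + ‖w‖) ^ j * ((1 + |s|) ^ k * ‖u (w, s)‖) ≤ C := by
  refine ⟨2 ^ (j + k) *
    ((Finset.Iic (j + k, 0)).sup (fun m => SchwartzMap.seminorm ℝ m.1 m.2)) u,
    mul_nonneg (by positivity) (apply_nonneg _ _), fun w s => ?_⟩
  have h := SchwartzMap.one_add_le_sup_seminorm_apply (𝕜 := ℝ) (m := (j + k, 0))
    le_rfl le_rfl u (w, s)
  rw [norm_iteratedFDeriv_zero] at h
  refine le_trans ?_ h
  have h1 : (1 : ℝ) + ‖w‖ ≤ 1 + ‖((w, s) : Rn n)‖ := by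
    have := norm_fst_le ((w, s) : Rn n); linarith
  have h2 : (1 : ℝ) + |s| ≤ 1 + ‖((w, s) : Rn n)‖ := by
    have := norm_snd_le ((w, s) : Rn n)
    rw [Real.norm_eq_abs] at this; linarith
  calc (1 + ‖w‖) ^ j * ((1 + |s|) ^ k * ‖u (w, s)‖)
      ≤ (1 + ‖((w, s) : Rn n)‖) ^ j * ((1 + ‖((w, s) : Rn n)‖) ^ k * ‖u (w, s)‖) := by
        gcongr <;> positivity
    _ = (1 + ‖((w, s) : Rn n)‖) ^ (j + k) * ‖u (w, s)‖ := by rw [pow_add]; ring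

lemma majorant (hn : 2 ≤ n) (x₁ : EuclideanSpace ℝ (Fin (n-1))) :
    Integrable (fun y' : EuclideanSpace ℝ (Fin (n-1)) => ((1 + ‖x₁ - y'‖) ^ n)⁻¹) := by
  have h0 : Integrable (fun y' : EuclideanSpace ℝ (Fin (n-1)) => (1 + ‖y'‖) ^ (-(n : ℝ))) := by
    apply integrable_one_add_norm
    rw [finrank_euclideanSpace_fin]
    exact_mod_cast Nat.sub_lt (by omega) one_pos
  have h1 := h0.comp_sub_left x₁
  refine h1.congr (Eventually.of_forall fun y' => ?_)
  beta_reduce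
  rw [Real.rpow_neg (by positivity), Real.rpow_natCast]

lemma sectBound (u : SchwartzMap (Rn n) ℂ) (x₁ : EuclideanSpace ℝ (Fin (n-1))) :
    ∃ C : ℝ, 0 ≤ C ∧ ∀ (s : ℝ) (y' : EuclideanSpace ℝ (Fin (n-1))),
      ‖u (x₁ - y', s)‖ ≤ C * ((1 + ‖x₁ - y'‖) ^ n)⁻¹ := by
  obtain ⟨C, hC0, hC⟩ := decay1 u n 0
  refine ⟨C, hC0, fun s y' => ?_⟩
  have h := hC (x₁ - y') s
  simp only [pow_zero, one_mul] at h
  rw [← div_eq_mul_inv, le_div_iff₀ (by positivity), mul_comm]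
  exact h

lemma contMap (x₁ : EuclideanSpace ℝ (Fin (n-1))) (c ε t : ℝ) :
    Continuous (fun y' : EuclideanSpace ℝ (Fin (n-1)) =>
      ((x₁ - y', c - ‖y'‖ ^ 2 - ε * t) : Rn n)) := by
  fun_prop

lemma sectInt (hn : 2 ≤ n) (u : SchwartzMap (Rn n) ℂ)
    (x₁ : EuclideanSpace ℝ (Fin (n-1))) (c ε t : ℝ) :
    Integrable (fun y' : EuclideanSpace ℝ (Fin (n-1)) =>
      u (x₁ - y', c - ‖y'‖ ^ 2 - ε * t)) := by
  obtain ⟨C, hC0, hC⟩ := sectBound u x₁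
  refine Integrable.mono' ((majorant hn x₁).const_mul C)
    ((u.continuous.comp (contMap x₁ c ε t)).aestronglyMeasurable)
    (Eventually.of_forall fun y' => hC _ y')

lemma sectIntNorm (hn : 2 ≤ n) (u : SchwartzMap (Rn n) ℂ)
    (x₁ : EuclideanSpace ℝ (Fin (n-1))) (c ε t : ℝ) :
    Integrable (fun y' : EuclideanSpace ℝ (Fin (n-1)) =>
      ‖u (x₁ - y', c - ‖y'‖ ^ 2 - ε * t)‖) :=
  (sectInt hn u x₁ c ε t).norm

/-- the key decay estimate for the integral of the norm -/
lemma decayI (hn : 2 ≤ n) (u : SchwartzMap (Rn n) ℂ)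
    (x₁ : EuclideanSpace ℝ (Fin (n-1))) (c : ℝ) {ε : ℝ} (hε : ε = 1 ∨ ε = -1) (m : ℕ) :
    ∃ C : ℝ, 0 ≤ C ∧ ∀ t : ℝ, 0 ≤ t →
      (1 + t) ^ m * ∫ y' : EuclideanSpace ℝ (Fin (n-1)),
        ‖u (x₁ - y', c - ‖y'‖ ^ 2 - ε * t)‖ ≤ C := by
  obtain ⟨C₀, hC₀0, hC₀⟩ := decay1 u (2 * m + n) m
  set A : ℝ := (1 + |c|) ^ m * (1 + ‖x₁‖) ^ (2 * m) * C₀ with hA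
  have hA0 : 0 ≤ A := by positivity
  have key : ∀ t : ℝ, 0 ≤ t → ∀ y' : EuclideanSpace ℝ (Fin (n-1)),
      (1 + t) ^ m * ‖u (x₁ - y', c - ‖y'‖ ^ 2 - ε * t)‖ ≤ A * ((1 + ‖x₁ - y'‖) ^ n)⁻¹ := by
    intro t ht y'
    set w := x₁ - y' with hw
    set s := c - ‖y'‖ ^ 2 - ε * t with hs
    have hy' : ‖y'‖ ≤ ‖x₁‖ + ‖w‖ := by
      have : y' = x₁ - w := by rw [hw]; abel
      rw [this]; exact norm_sub_le _ _
    have ht1 : t ≤ |c| + ‖y'‖ ^ 2 + |s| := by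
      rcases hε with rfl | rfl
      · nlinarith [le_abs_self c, neg_abs_le s, sq_nonneg ‖y'‖]
      · nlinarith [neg_abs_le c, le_abs_self s, sq_nonneg ‖y'‖]
    have hyb : 1 + ‖y'‖ ≤ (1 + ‖x₁‖) * (1 + ‖w‖) := by
      nlinarith [mul_nonneg (norm_nonneg x₁) (norm_nonneg w)]
    have h1 : (1 : ℝ) + t ≤ (1 + |c|) * (1 + ‖x₁‖) ^ 2 * (1 + ‖w‖) ^ 2 * (1 + |s|) := by
      have h2 : ‖y'‖ ^ 2 ≤ (1 + ‖x₁‖) ^ 2 * (1 + ‖w‖) ^ 2 - 1 := by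
        nlinarith [norm_nonneg y', norm_nonneg x₁, norm_nonneg w]
      nlinarith [abs_nonneg c, abs_nonneg s, norm_nonneg x₁, norm_nonneg w,
        mul_nonneg (abs_nonneg c) (abs_nonneg s),
        mul_nonneg (mul_nonneg (abs_nonneg c) (abs_nonneg s))
          (mul_nonneg (sq_nonneg (1 + ‖x₁‖)) (sq_nonneg (1 + ‖w‖))),
        mul_nonneg (abs_nonneg c) (mul_nonneg (sq_nonneg (1 + ‖x₁‖)) (sq_nonneg (1 + ‖w‖))),
        mul_nonneg (abs_nonneg s) (mul_nonneg (sq_nonneg (1 + ‖x₁‖)) (sq_nonneg (1 + ‖w‖)))]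
    have hstep : (1 + t) ^ m ≤
        (1 + |c|) ^ m * (1 + ‖x₁‖) ^ (2 * m) * (1 + ‖w‖) ^ (2 * m) * (1 + |s|) ^ m := by
      calc (1 + t) ^ m
          ≤ ((1 + |c|) * (1 + ‖x₁‖) ^ 2 * (1 + ‖w‖) ^ 2 * (1 + |s|)) ^ m :=
            pow_le_pow_left₀ (by positivity) h1 m
        _ = (1 + |c|) ^ m * (1 + ‖x₁‖) ^ (2 * m) * (1 + ‖w‖) ^ (2 * m) * (1 + |s|) ^ m := by
            rw [mul_pow, mul_pow, mul_pow, pow_mul, pow_mul]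
    rw [← div_eq_mul_inv, le_div_iff₀ (by positivity)]
    calc (1 + t) ^ m * ‖u (w, s)‖ * (1 + ‖w‖) ^ n
        ≤ ((1 + |c|) ^ m * (1 + ‖x₁‖) ^ (2 * m) * (1 + ‖w‖) ^ (2 * m) * (1 + |s|) ^ m)
            * ‖u (w, s)‖ * (1 + ‖w‖) ^ n := by
          gcongr
      _ = (1 + |c|) ^ m * (1 + ‖x₁‖) ^ (2 * m) *
            ((1 + ‖w‖) ^ (2 * m + n) * ((1 + |s|) ^ m * ‖u (w, s)‖)) := by
          rw [pow_add]; ring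
      _ ≤ (1 + |c|) ^ m * (1 + ‖x₁‖) ^ (2 * m) * C₀ :=
          mul_le_mul_of_nonneg_left (hC₀ w s) (by positivity)
      _ = A := rfl
  refine ⟨A * ∫ y' : EuclideanSpace ℝ (Fin (n-1)), ((1 + ‖x₁ - y'‖) ^ n)⁻¹,
    mul_nonneg hA0 (integral_nonneg fun y' => by positivity), fun t ht => ?_⟩
  rw [← integral_const_mul, ← integral_const_mul]
  refine integral_mono ?_ ?_ (fun y' => key t ht y')
  · exact (sectIntNorm hn u x₁ c ε t).const_mul _
  · exact (majorant hn x₁).const_mul A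

/-- pointwise derivative in `t` -/
lemma pt_deriv (u : SchwartzMap (Rn n) ℂ) (x₁ y' : EuclideanSpace ℝ (Fin (n-1)))
    (c ε t : ℝ) :
    HasDerivAt (fun t : ℝ => u (x₁ - y', c - ‖y'‖ ^ 2 - ε * t))
      (-(ε : ℂ) * (LineDeriv.lineDerivOpCLM ℝ (SchwartzMap (Rn n) ℂ) (((0 : EuclideanSpace ℝ (Fin (n-1))), (1 : ℝ)) : Rn n) u)
        (x₁ - y', c - ‖y'‖ ^ 2 - ε * t)) t := by
  set z : ℝ → Rn n := fun t => (x₁ - y', c - ‖y'‖ ^ 2 - ε * t) with hz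
  set v : Rn n := ((0 : EuclideanSpace ℝ (Fin (n-1))), -ε) with hv
  have hzd : HasDerivAt z v t := by
    have h := ((hasDerivAt_id t).smul_const v).const_add ((x₁ - y', c - ‖y'‖ ^ 2) : Rn n)
    rw [one_smul] at h
    refine h.congr_of_eventuallyEq (Eventually.of_forall fun t => ?_)
    refine Prod.ext ?_ ?_
    · simp [hv, hz]
    · simp only [hz, hv, Prod.snd_add, Prod.smul_snd, smul_eq_mul, id]
      ring
  have hu : HasFDerivAt u (fderiv ℝ u (z t)) (z t) :=
    (u.differentiable.differentiableAt).hasFDerivAt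
  have h2 := hu.comp_hasDerivAt t hzd
  refine h2.congr_deriv ?_
  have hv' : v = (-ε) • ((((0 : EuclideanSpace ℝ (Fin (n-1))), (1 : ℝ))) : Rn n) := by
    refine Prod.ext ?_ ?_ <;> simp [hv]
  rw [LineDeriv.lineDerivOpCLM_apply, SchwartzMap.lineDerivOp_apply_eq_fderiv, hv', _root_.map_smul]
  simp [Complex.real_smul, Complex.ofReal_neg, hz]

lemma gI_hasDeriv (hn : 2 ≤ n) (u : SchwartzMap (Rn n) ℂ)
    (x₁ : EuclideanSpace ℝ (Fin (n-1))) (c : ℝ) {ε : ℝ} (hε : ε = 1 ∨ ε = -1) (t₀ : ℝ) :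
    HasDerivAt (gI n x₁ c ε u)
      (-(ε : ℂ) * gI n x₁ c ε
        (LineDeriv.lineDerivOpCLM ℝ (SchwartzMap (Rn n) ℂ) (((0 : EuclideanSpace ℝ (Fin (n-1))), (1 : ℝ)) : Rn n) u) t₀)
      t₀ := by
  set u' := LineDeriv.lineDerivOpCLM ℝ (SchwartzMap (Rn n) ℂ) (((0 : EuclideanSpace ℝ (Fin (n-1))), (1 : ℝ)) : Rn n) u
    with hu'
  obtain ⟨C, hC0, hC⟩ := sectBound u' x₁
  have hεnorm : ‖(-(ε:ℂ))‖ = 1 := by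
    rcases hε with rfl | rfl <;> norm_num
  have key := hasDerivAt_integral_of_dominated_loc_of_deriv_le (μ := volume)
    (x₀ := t₀) (Metric.ball_mem_nhds t₀ one_pos)
    (F := fun t y' => u (x₁ - y', c - ‖y'‖ ^ 2 - ε * t))
    (F' := fun t y' => -(ε : ℂ) * u' (x₁ - y', c - ‖y'‖ ^ 2 - ε * t))
    (bound := fun y' => C * ((1 + ‖x₁ - y'‖) ^ n)⁻¹)
    ?_ ?_ ?_ ?_ ?_ ?_
  · have h := key.2
    rw [integral_const_mul] at h
    exact h
  · exact Eventually.of_forall fun t =>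
      ((u.continuous.comp (contMap x₁ c ε t)).aestronglyMeasurable)
  · exact sectInt hn u x₁ c ε t₀
  · exact ((u'.continuous.comp (contMap x₁ c ε t₀)).aestronglyMeasurable).const_mul _
  · refine Eventually.of_forall fun y' => fun t _ => ?_
    rw [norm_mul, hεnorm, one_mul]
    exact hC _ y'
  · exact (majorant hn x₁).const_mul C
  · exact Eventually.of_forall fun y' => fun t _ => pt_deriv u x₁ y' c ε t

lemma gI_decay (hn : 2 ≤ n) (u : SchwartzMap (Rn n) ℂ)
    (x₁ : EuclideanSpace ℝ (Fin (n-1))) (c : ℝ) {ε : ℝ} (hε : ε = 1 ∨ ε = -1) (m : ℕ) :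
    ∃ C : ℝ, 0 ≤ C ∧ ∀ t : ℝ, 0 ≤ t → (1 + t) ^ m * ‖gI n x₁ c ε u t‖ ≤ C := by
  obtain ⟨C, hC0, hC⟩ := decayI hn u x₁ c hε m
  refine ⟨C, hC0, fun t ht => ?_⟩
  refine le_trans ?_ (hC t ht)
  have h1 : ‖gI n x₁ c ε u t‖ ≤ ∫ y' : EuclideanSpace ℝ (Fin (n-1)),
      ‖u (x₁ - y', c - ‖y'‖ ^ 2 - ε * t)‖ := norm_integral_le_integral_norm _
  have h2 : (0:ℝ) ≤ (1 + t) ^ m := by positivity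
  exact mul_le_mul_of_nonneg_left h1 h2

/-- generic: polynomial decay at `+∞` gives `O(x^(-a))` for every `a` -/
lemma bigO_atTop_of_decay {φ : ℝ → ℂ}
    (h : ∀ m : ℕ, ∃ C : ℝ, 0 ≤ C ∧ ∀ t : ℝ, 0 ≤ t → (1 + t) ^ m * ‖φ t‖ ≤ C) (a : ℝ) :
    φ =O[atTop] (fun t : ℝ => t ^ (-a)) := by
  obtain ⟨C, hC0, hC⟩ := h ⌈a⌉₊
  refine Asymptotics.IsBigO.of_bound C ?_
  filter_upwards [eventually_ge_atTop (1 : ℝ)] with t ht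
  have ht0 : (0:ℝ) < t := by linarith
  have h1 : ‖φ t‖ * t ^ a ≤ C := by
    have h2 : t ^ a ≤ (1 + t) ^ (⌈a⌉₊ : ℕ) := by
      calc t ^ a ≤ t ^ ((⌈a⌉₊ : ℝ)) :=
            Real.rpow_le_rpow_of_exponent_le ht (Nat.le_ceil a)
        _ = t ^ (⌈a⌉₊ : ℕ) := Real.rpow_natCast t _
        _ ≤ (1 + t) ^ (⌈a⌉₊ : ℕ) := by gcongr; linarith
    calc ‖φ t‖ * t ^ a ≤ ‖φ t‖ * (1 + t) ^ (⌈a⌉₊ : ℕ) := by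
          exact mul_le_mul_of_nonneg_left h2 (norm_nonneg _)
      _ = (1 + t) ^ (⌈a⌉₊ : ℕ) * ‖φ t‖ := by ring
      _ ≤ C := hC t ht0.le
  rw [Real.norm_eq_abs, _root_.abs_of_nonneg (Real.rpow_nonneg ht0.le _), Real.rpow_neg ht0.le,
    ← div_eq_mul_inv, le_div_iff₀ (Real.rpow_pos_of_pos ht0 a)]
  exact h1

lemma bigO_zero_of_continuous {φ : ℝ → ℂ} (h : Continuous φ) :
    φ =O[𝓝[>] (0:ℝ)] (fun t : ℝ => t ^ (-(0:ℝ))) := by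
  have he : (fun t : ℝ => t ^ (-(0:ℝ))) = fun _ : ℝ => (1 : ℝ) := by
    funext t; rw [neg_zero, Real.rpow_zero]
  rw [he]
  exact ((h.tendsto 0).mono_left nhdsWithin_le_nhds).isBigO_one ℝ

lemma mellinConv_of_decay {φ : ℝ → ℂ} (hc : Continuous φ)
    (h : ∀ m : ℕ, ∃ C : ℝ, 0 ≤ C ∧ ∀ t : ℝ, 0 ≤ t → (1 + t) ^ m * ‖φ t‖ ≤ C)
    {s : ℂ} (hs : 0 < s.re) : MellinConvergent φ s :=
  mellinConvergent_of_isBigO_rpow (hc.locallyIntegrable.locallyIntegrableOn _)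
    (bigO_atTop_of_decay h (s.re + 1)) (by linarith) (bigO_zero_of_continuous hc) hs

lemma mellinDiff_of_decay {φ : ℝ → ℂ} (hc : Continuous φ)
    (h : ∀ m : ℕ, ∃ C : ℝ, 0 ≤ C ∧ ∀ t : ℝ, 0 ≤ t → (1 + t) ^ m * ‖φ t‖ ≤ C)
    {s : ℂ} (hs : 0 < s.re) : DifferentiableAt ℂ (mellin φ) s :=
  mellin_differentiableAt_of_isBigO_rpow (hc.locallyIntegrable.locallyIntegrableOn _)
    (bigO_atTop_of_decay h (s.re + 1)) (by linarith) (bigO_zero_of_continuous hc) hs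

/-- Integration by parts for the Mellin transform. -/
lemma mellin_IBP {φ ψ : ℝ → ℂ} (hψc : Continuous ψ)
    (hd : ∀ t : ℝ, HasDerivAt φ (ψ t) t)
    (hφdec : ∀ m : ℕ, ∃ C : ℝ, 0 ≤ C ∧ ∀ t : ℝ, 0 ≤ t → (1 + t) ^ m * ‖φ t‖ ≤ C)
    (hψdec : ∀ m : ℕ, ∃ C : ℝ, 0 ≤ C ∧ ∀ t : ℝ, 0 ≤ t → (1 + t) ^ m * ‖ψ t‖ ≤ C)
    {s : ℂ} (hs : 0 < s.re) :
    s * mellin φ s = - mellin ψ (s + 1) := by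
  have hφc : Continuous φ := by
    rw [continuous_iff_continuousAt]; exact fun t => (hd t).continuousAt
  have hs0 : s ≠ 0 := fun h => by rw [h] at hs; simp at hs
  have hI1 : MellinConvergent φ s := mellinConv_of_decay hφc hφdec hs
  have hI2 : MellinConvergent ψ (s + 1) := mellinConv_of_decay hψc hψdec
    (by rw [Complex.add_re, Complex.one_re]; linarith)
  -- the two pieces of the derivative of Ψ t = t^s * φ t
  have hA : IntegrableOn (fun t : ℝ => s * ((t : ℂ) ^ (s - 1) * φ t)) (Ioi 0) := by
    have := hI1.const_mul s
    simpa only [smul_eq_mul, IntegrableOn] using this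
  have hB : IntegrableOn (fun t : ℝ => (t : ℂ) ^ s * ψ t) (Ioi 0) := by
    have h := hI2
    unfold MellinConvergent at h
    simpa only [add_sub_cancel_right, smul_eq_mul] using h
  have hΨd : ∀ t ∈ Ioi (0:ℝ), HasDerivAt (fun t : ℝ => (t : ℂ) ^ s * φ t)
      (s * ((t : ℂ) ^ (s - 1) * φ t) + (t : ℂ) ^ s * ψ t) t := by
    intro t ht
    rw [mem_Ioi] at ht
    have hs1 : s - 1 ≠ -1 := by
      intro h; exact hs0 (by linear_combination h)
    have h0 := hasDerivAt_ofReal_cpow_const' (ne_of_gt ht) hs1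
    rw [sub_add_cancel] at h0
    have h1 := h0.const_mul s
    have he : (fun y : ℝ => s * ((y:ℂ) ^ s / s)) = fun y : ℝ => (y:ℂ) ^ s := by
      funext y; field_simp
    rw [he] at h1
    have := h1.mul (hd t)
    exact this.congr_deriv (by ring)
  -- continuity at 0 from the right
  have hbd0 : ∃ C : ℝ, 0 ≤ C ∧ ∀ t : ℝ, 0 ≤ t → ‖φ t‖ ≤ C := by
    obtain ⟨C, hC0, hC⟩ := hφdec 0
    exact ⟨C, hC0, fun t ht => by have := hC t ht; simpa using this⟩
  obtain ⟨C₀, hC₀0, hC₀⟩ := hbd0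
  have hΨ0 : ((0:ℝ) : ℂ) ^ s * φ 0 = 0 := by
    rw [Complex.ofReal_zero, Complex.zero_cpow hs0, zero_mul]
  have hcont0 : ContinuousWithinAt (fun t : ℝ => (t : ℂ) ^ s * φ t) (Ici 0) 0 := by
    rw [ContinuousWithinAt, hΨ0]
    apply squeeze_zero_norm' (a := fun t : ℝ => C₀ * t ^ s.re)
    · filter_upwards [self_mem_nhdsWithin] with t (ht : t ∈ Ici (0:ℝ))
      rw [mem_Ici] at ht
      rcases eq_or_lt_of_le ht with h | h
      · rw [← h]
        rw [norm_mul, Complex.ofReal_zero, Complex.zero_cpow hs0, norm_zero, zero_mul,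
          Real.zero_rpow (ne_of_gt hs), mul_zero]
      · rw [norm_mul, Complex.norm_cpow_eq_rpow_re_of_pos h, mul_comm]
        exact mul_le_mul_of_nonneg_right (hC₀ t ht) (Real.rpow_nonneg ht _)
    · have h1 : ContinuousWithinAt (fun t : ℝ => t ^ s.re) (Ici 0) 0 :=
        (Real.continuousAt_rpow_const 0 s.re (Or.inr hs.le)).continuousWithinAt
      have h2 := h1.tendsto
      rw [Real.zero_rpow (ne_of_gt hs)] at h2
      have := h2.const_mul C₀
      simpa using this
  -- limit at +∞
  have htop : Tendsto (fun t : ℝ => (t : ℂ) ^ s * φ t) atTop (𝓝 0) := by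
    obtain ⟨C, hC0, hC⟩ := hφdec (⌈s.re⌉₊ + 1)
    apply squeeze_zero_norm' (a := fun t : ℝ => C * t ^ (s.re - (⌈s.re⌉₊ + 1 : ℕ)))
    · filter_upwards [eventually_ge_atTop (1:ℝ)] with t ht
      have ht0 : (0:ℝ) < t := by linarith
      rw [norm_mul, Complex.norm_cpow_eq_rpow_re_of_pos ht0]
      have h1 : ‖φ t‖ ≤ C / (1 + t) ^ (⌈s.re⌉₊ + 1 : ℕ) := by
        rw [le_div_iff₀ (by positivity), mul_comm]
        exact hC t ht0.le
      have h2 : C / (1 + t) ^ (⌈s.re⌉₊ + 1 : ℕ) ≤ C / t ^ (⌈s.re⌉₊ + 1 : ℕ) := by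
        rw [div_le_div_iff₀ (by positivity) (by positivity)]
        exact mul_le_mul_of_nonneg_left (pow_le_pow_left₀ (by positivity) (by linarith) _) hC0
      calc t ^ s.re * ‖φ t‖ ≤ t ^ s.re * (C / t ^ (⌈s.re⌉₊ + 1 : ℕ)) := by
            exact mul_le_mul_of_nonneg_left (h1.trans h2) (Real.rpow_nonneg ht0.le _)
        _ = C * t ^ (s.re - (⌈s.re⌉₊ + 1 : ℕ)) := by
            rw [Real.rpow_sub ht0, Real.rpow_natCast]; ring
    · have hy : (0:ℝ) < (⌈s.re⌉₊ + 1 : ℕ) - s.re := by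
        have := Nat.le_ceil s.re
        push_cast
        push_cast at this
        linarith
      have := (tendsto_rpow_neg_atTop hy).const_mul C
      rw [mul_zero] at this
      convert this using 2 with t
      rw [neg_sub]
  have key := integral_Ioi_of_hasDerivAt_of_tendsto hcont0 hΨd (hA.add hB) htop
  rw [hΨ0, zero_sub, neg_zero] at key
  rw [integral_add hA hB] at key
  have e1 : ∫ t in Ioi (0:ℝ), s * ((t : ℂ) ^ (s - 1) * φ t) = s * mellin φ s := by
    rw [integral_const_mul]; rfl
  have e2 : ∫ t in Ioi (0:ℝ), (t : ℂ) ^ s * ψ t = mellin ψ (s + 1) := by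
    unfold mellin
    simp only [add_sub_cancel_right, smul_eq_mul]
  rw [e1, e2] at key
  linear_combination key

/-- iterated partial derivative in the last variable -/
def uD (n : ℕ) (k : ℕ) (f : SchwartzMap (Rn n) ℂ) : SchwartzMap (Rn n) ℂ :=
  (LineDeriv.lineDerivOpCLM ℝ (SchwartzMap (Rn n) ℂ) (((0 : EuclideanSpace ℝ (Fin (n-1))), (1 : ℝ)) : Rn n))^[k] f

lemma uD_succ (k : ℕ) (f : SchwartzMap (Rn n) ℂ) :
    uD n (k + 1) f =
      LineDeriv.lineDerivOpCLM ℝ (SchwartzMap (Rn n) ℂ) (((0 : EuclideanSpace ℝ (Fin (n-1))), (1 : ℝ)) : Rn n)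
        (uD n k f) :=
  Function.iterate_succ_apply' _ _ _

/-- the analytic family -/
def FF (n : ℕ) (x₁ : EuclideanSpace ℝ (Fin (n-1))) (c ε : ℝ) (f : SchwartzMap (Rn n) ℂ)
    (k : ℕ) (α : ℂ) : ℂ :=
  (ε : ℂ) ^ k * (Complex.Gamma (α + k))⁻¹ * mellin (gI n x₁ c ε (uD n k f)) (α + k)

section FFfacts

variable (hn : 2 ≤ n) (x₁ : EuclideanSpace ℝ (Fin (n-1))) (c : ℝ) {ε : ℝ}
  (hε : ε = 1 ∨ ε = -1) (f : SchwartzMap (Rn n) ℂ)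

include hn hε

lemma gg_hasDeriv (k : ℕ) (t : ℝ) :
    HasDerivAt (gI n x₁ c ε (uD n k f)) (-(ε : ℂ) * gI n x₁ c ε (uD n (k+1) f) t) t := by
  rw [uD_succ]
  exact gI_hasDeriv hn (uD n k f) x₁ c hε t

lemma gg_cont (k : ℕ) : Continuous (gI n x₁ c ε (uD n k f)) :=
  continuous_iff_continuousAt.mpr fun t => (gg_hasDeriv hn x₁ c hε f k t).continuousAt

lemma gg_dec (k : ℕ) :
    ∀ m : ℕ, ∃ C : ℝ, 0 ≤ C ∧ ∀ t : ℝ, 0 ≤ t →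
      (1 + t) ^ m * ‖gI n x₁ c ε (uD n k f) t‖ ≤ C :=
  fun m => gI_decay hn (uD n k f) x₁ c hε m

lemma ggψ_dec (k : ℕ) :
    ∀ m : ℕ, ∃ C : ℝ, 0 ≤ C ∧ ∀ t : ℝ, 0 ≤ t →
      (1 + t) ^ m * ‖-(ε : ℂ) * gI n x₁ c ε (uD n (k+1) f) t‖ ≤ C := by
  intro m
  obtain ⟨C, hC0, hC⟩ := gg_dec hn x₁ c hε f (k+1) m
  refine ⟨C, hC0, fun t ht => ?_⟩
  have hεnorm : ‖(-(ε:ℂ))‖ = 1 := by rcases hε with rfl | rfl <;> norm_num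
  rw [norm_mul, hεnorm, one_mul]
  exact hC t ht

lemma FF_succ (k : ℕ) {α : ℂ} (h : 0 < (α + k).re) :
    FF n x₁ c ε f k α = FF n x₁ c ε f (k+1) α := by
  set s : ℂ := α + k with hsdef
  have hs0 : s ≠ 0 := fun hh => by rw [hh] at h; simp at h
  have hIBP := mellin_IBP
    (ψ := fun t => -(ε : ℂ) * gI n x₁ c ε (uD n (k+1) f) t)
    ((continuous_const.mul (gg_cont hn x₁ c hε f (k+1))))
    (fun t => gg_hasDeriv hn x₁ c hε f k t)
    (gg_dec hn x₁ c hε f k) (ggψ_dec hn x₁ c hε f k) h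
  have hm : mellin (fun t => -(ε : ℂ) * gI n x₁ c ε (uD n (k+1) f) t) (s + 1)
      = -(ε : ℂ) * mellin (gI n x₁ c ε (uD n (k+1) f)) (s + 1) := by
    simpa only [smul_eq_mul] using
      mellin_const_smul (gI n x₁ c ε (uD n (k+1) f)) (s + 1) (-(ε : ℂ))
  rw [hm] at hIBP
  -- hIBP : s * mellin gg_k s = -(-(ε) * mellin gg_{k+1} (s+1))
  have hΓ : Complex.Gamma s ≠ 0 := Complex.Gamma_ne_zero_of_re_pos h
  have hΓ1 : Complex.Gamma (s + 1) = s * Complex.Gamma s := Complex.Gamma_add_one s hs0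
  have hcast : (α + ((k : ℕ) + 1 : ℕ)) = s + 1 := by rw [hsdef]; push_cast; ring
  unfold FF
  rw [hcast, hΓ1]
  have hX : mellin (gI n x₁ c ε (uD n k f)) s
      = (ε : ℂ) * mellin (gI n x₁ c ε (uD n (k+1) f)) (s + 1) / s := by
    rw [eq_div_iff hs0]
    linear_combination hIBP
  rw [hX]
  rw [← hsdef]
  have hsG : s * Complex.Gamma s ≠ 0 := mul_ne_zero hs0 hΓ
  field_simp
  ring

lemma FF_diff (k : ℕ) {α : ℂ} (hα : -(k : ℝ) < α.re) :
    DifferentiableAt ℂ (FF n x₁ c ε f k) α := by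
  have hre : 0 < (α + k).re := by
    rw [Complex.add_re, Complex.natCast_re]
    linarith
  have d1 : DifferentiableAt ℂ (fun β : ℂ => (Complex.Gamma (β + k))⁻¹) α :=
    (Complex.differentiable_one_div_Gamma.comp
      (differentiable_id.add_const _)).differentiableAt
  have d2 : DifferentiableAt ℂ (fun β : ℂ => mellin (gI n x₁ c ε (uD n k f)) (β + k)) α := by
    have hm : DifferentiableAt ℂ (mellin (gI n x₁ c ε (uD n k f))) (α + k) :=
      mellinDiff_of_decay (gg_cont hn x₁ c hε f k) (gg_dec hn x₁ c hε f k) hre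
    exact DifferentiableAt.comp (g := mellin (gI n x₁ c ε (uD n k f))) α hm (differentiableAt_id.add_const _)
  exact ((differentiableAt_const _).mul d1).mul d2

lemma FF_agree {k j : ℕ} (hkj : k ≤ j) {α : ℂ} (hα : -(k : ℝ) < α.re) :
    FF n x₁ c ε f k α = FF n x₁ c ε f j α := by
  induction j, hkj using Nat.le_induction with
  | base => rfl
  | succ j hkj ih =>
    rw [ih]
    refine FF_succ hn x₁ c hε f j ?_
    rw [Complex.add_re, Complex.natCast_re]
    have : (k : ℝ) ≤ j := by exact_mod_cast hkj
    linarith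

end FFfacts

/-- the shear `(y', t) ↦ (y', ‖y'‖² + εt)` as a measurable equivalence -/
def shearEquiv (n : ℕ) {ε : ℝ} (hε : ε = 1 ∨ ε = -1) :
    (EuclideanSpace ℝ (Fin (n-1)) × ℝ) ≃ᵐ (EuclideanSpace ℝ (Fin (n-1)) × ℝ) where
  toEquiv :=
    { toFun := fun p => (p.1, ‖p.1‖ ^ 2 + ε * p.2)
      invFun := fun p => (p.1, ε * (p.2 - ‖p.1‖ ^ 2))
      left_inv := fun p => by
        have hε2 : ε * ε = 1 := by rcases hε with rfl | rfl <;> norm_num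
        refine Prod.ext rfl ?_
        show ε * (‖p.1‖ ^ 2 + ε * p.2 - ‖p.1‖ ^ 2) = p.2
        linear_combination p.2 * hε2
      right_inv := fun p => by
        have hε2 : ε * ε = 1 := by rcases hε with rfl | rfl <;> norm_num
        refine Prod.ext rfl ?_
        show ‖p.1‖ ^ 2 + ε * (ε * (p.2 - ‖p.1‖ ^ 2)) = p.2
        linear_combination (p.2 - ‖p.1‖ ^ 2) * hε2 }
  measurable_toFun := by
    refine measurable_fst.prodMk ?_
    fun_prop
  measurable_invFun := by
    refine measurable_fst.prodMk ?_
    fun_prop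

lemma shear_mp {n : ℕ} {ε : ℝ} (hε : ε = 1 ∨ ε = -1) :
    MeasurePreserving (shearEquiv n hε)
      ((volume : Measure (EuclideanSpace ℝ (Fin (n-1)))).prod (volume : Measure ℝ))
      ((volume : Measure (EuclideanSpace ℝ (Fin (n-1)))).prod (volume : Measure ℝ)) := by
  have hgm : Measurable (Function.uncurry fun (a : EuclideanSpace ℝ (Fin (n-1))) (t : ℝ) =>
      ‖a‖ ^ 2 + ε * t) := by fun_prop
  have hg : ∀ᵐ a : EuclideanSpace ℝ (Fin (n-1)) ∂volume,
      Measure.map (fun t : ℝ => ‖a‖ ^ 2 + ε * t) volume = volume := by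
    refine Eventually.of_forall fun a => ?_
    rcases hε with rfl | rfl
    · have h : MeasurePreserving (fun t : ℝ => ‖a‖ ^ 2 + 1 * t) volume volume := by
        simpa [one_mul] using measurePreserving_add_left (volume : Measure ℝ) (‖a‖ ^ 2)
      exact h.map_eq
    · have h : MeasurePreserving (fun t : ℝ => ‖a‖ ^ 2 + -1 * t) volume volume := by
        have := (measurePreserving_add_left (volume : Measure ℝ) (‖a‖ ^ 2)).comp
          (Measure.measurePreserving_neg (volume : Measure ℝ))
        simpa [Function.comp_def, neg_one_mul] using this
      exact h.map_eq
  have := MeasurePreserving.skew_product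
    (MeasurePreserving.id (volume : Measure (EuclideanSpace ℝ (Fin (n-1)))))
    hgm hg
  exact this

end PPEaux

namespace PPEaux

lemma fubini_step {n : ℕ} (hn : 2 ≤ n) (σ : Bool) (f : SchwartzMap (Rn n) ℂ) (x : Rn n)
    {α : ℂ} (hα : 0 < α.re) :
    ∫ y : Rn n, ppow σ (y.2 - ‖y.1‖ ^ 2) (α - 1) * (f (x - y))
      = mellin (gI n x.1 x.2 (if σ then 1 else -1) f) α := by
  set ε : ℝ := if σ then 1 else -1 with hεdef
  have hε : ε = 1 ∨ ε = -1 := by cases σ <;> simp [hεdef]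
  set pw : ℝ → ℂ := fun t => if 0 < t then Complex.exp ((α - 1) * Real.log t) else 0 with hpw
  set W : (EuclideanSpace ℝ (Fin (n-1)) × ℝ) → ℂ :=
    fun p => pw p.2 * f (x.1 - p.1, x.2 - ‖p.1‖ ^ 2 - ε * p.2) with hWdef
  have hOW : ∀ p : EuclideanSpace ℝ (Fin (n-1)) × ℝ,
      ppow σ ((shearEquiv n hε p).2 - ‖(shearEquiv n hε p).1‖ ^ 2) (α - 1)
        * (f (x - shearEquiv n hε p)) = W p := by
    rintro ⟨y', t⟩
    have harg : x - (shearEquiv n hε (y', t)) =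
        ((x.1 - y', x.2 - ‖y'‖ ^ 2 - ε * t) : Rn n) := by
      refine Prod.ext rfl ?_
      show x.2 - (‖y'‖ ^ 2 + ε * t) = x.2 - ‖y'‖ ^ 2 - ε * t
      ring
    have harg2 : (shearEquiv n hε (y', t)).2 - ‖(shearEquiv n hε (y', t)).1‖ ^ 2 = ε * t := by
      show ‖y'‖ ^ 2 + ε * t - ‖y'‖ ^ 2 = ε * t
      ring
    rw [harg, harg2]
    simp only [hWdef]
    congr 1
    cases σ with
    | true =>
      have hε1 : ε = 1 := by simp [hεdef]
      rw [hε1, hpw]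
      simp only [ppow, one_mul, if_true]
    | false =>
      have hε1 : ε = -1 := by simp [hεdef]
      rw [hε1, hpw]
      simp only [ppow, Bool.false_eq_true, if_false, neg_one_mul, neg_neg, neg_lt_zero]
  -- measurability of pw
  have hpwm : Measurable pw := by
    refine Measurable.ite (measurableSet_Ioi (a := (0:ℝ))) ?_ measurable_const
    exact Complex.measurable_exp.comp
      (measurable_const.mul (Complex.measurable_ofReal.comp Real.measurable_log))
  have hfcont : Continuous fun p : EuclideanSpace ℝ (Fin (n-1)) × ℝ =>
      (f ((x.1 - p.1, x.2 - ‖p.1‖ ^ 2 - ε * p.2) : Rn n) : ℂ) := by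
    apply f.continuous.comp
    fun_prop
  have hWm : AEStronglyMeasurable W
      ((volume : Measure (EuclideanSpace ℝ (Fin (n-1)))).prod (volume : Measure ℝ)) :=
    ((hpwm.comp measurable_snd).aestronglyMeasurable).mul hfcont.aestronglyMeasurable
  -- the integral of the norm of the section
  set Fn : ℝ → ℝ := fun t => ∫ y' : EuclideanSpace ℝ (Fin (n-1)),
    ‖f (x.1 - y', x.2 - ‖y'‖ ^ 2 - ε * t)‖ with hFndef
  have hFn0 : ∀ t, 0 ≤ Fn t := fun t => integral_nonneg fun y' => norm_nonneg _
  have hFnCont : Continuous Fn := by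
    obtain ⟨C, hC0, hC⟩ := sectBound f x.1
    refine continuous_of_dominated (bound := fun y' => C * ((1 + ‖x.1 - y'‖) ^ n)⁻¹)
      (fun t => ((sectIntNorm hn f x.1 x.2 ε t)).aestronglyMeasurable) ?_
      ((majorant hn x.1).const_mul C) ?_
    · intro t
      refine Eventually.of_forall fun y' => ?_
      rw [Real.norm_eq_abs, _root_.abs_of_nonneg (norm_nonneg _)]
      exact hC _ y'
    · refine Eventually.of_forall fun y' => Continuous.norm ?_
      exact f.continuous.comp (by fun_prop)
  have hpwnorm : ∀ t : ℝ, 0 < t → ‖pw t‖ = t ^ (α.re - 1) := by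
    intro t ht
    rw [hpw]
    simp only [if_pos ht]
    rw [Complex.norm_exp]
    rw [Real.rpow_def_of_pos ht]
    congr 1
    have : ((α - 1) * (Real.log t : ℂ)).re = (α.re - 1) * Real.log t := by
      simp [Complex.mul_re, Complex.sub_re, Complex.one_re, Complex.ofReal_re,
        Complex.ofReal_im]
    rw [this]
    ring
  -- integrability of W
  have hIW : Integrable W
      ((volume : Measure (EuclideanSpace ℝ (Fin (n-1)))).prod (volume : Measure ℝ)) := by
    rw [integrable_prod_iff' hWm]
    constructor
    · refine Eventually.of_forall fun t => ?_
      exact (sectInt hn f x.1 x.2 ε t).const_mul (pw t)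
    · have he : (fun t => ∫ y' : EuclideanSpace ℝ (Fin (n-1)), ‖W (y', t)‖)
          = fun t => ‖pw t‖ * Fn t := by
        funext t
        rw [← integral_const_mul]
        congr 1
        funext y'
        rw [hWdef, norm_mul]
      rw [he]
      have hsupp : Function.support (fun t => ‖pw t‖ * Fn t) ⊆ Ioi (0:ℝ) := by
        intro t ht
        rw [Function.mem_support] at ht
        by_contra hcon
        rw [mem_Ioi, not_lt] at hcon
        apply ht
        have : pw t = 0 := by rw [hpw]; exact if_neg (not_lt.mpr hcon)
        rw [this, norm_zero, zero_mul]
      rw [← integrableOn_iff_integrable_of_support_subset hsupp]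
      have hIoi : Ioc (0:ℝ) 1 ∪ Ioi 1 = Ioi 0 := Ioc_union_Ioi_eq_Ioi zero_le_one
      rw [← hIoi]
      have hmeas : AEStronglyMeasurable (fun t => ‖pw t‖ * Fn t) (volume : Measure ℝ) :=
        (hpwm.norm.aestronglyMeasurable).mul hFnCont.aestronglyMeasurable
      refine IntegrableOn.union ?_ ?_
      · -- on Ioc 0 1
        obtain ⟨C₀, hC₀0, hC₀⟩ := decayI hn f x.1 x.2 hε 0
        have hmaj : IntegrableOn (fun t : ℝ => C₀ * t ^ (α.re - 1)) (Ioc 0 1) := by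
          refine Integrable.const_mul ?_ C₀
          have h := intervalIntegral.intervalIntegrable_rpow' (a := 0) (b := 1) (by linarith : (-1:ℝ) < α.re - 1)
          rwa [intervalIntegrable_iff_integrableOn_Ioc_of_le zero_le_one] at h
        refine Integrable.mono' hmaj (hmeas.restrict) ?_
        filter_upwards [ae_restrict_mem measurableSet_Ioc] with t ht
        rw [Real.norm_eq_abs, _root_.abs_of_nonneg (mul_nonneg (norm_nonneg _) (hFn0 t))]
        rw [hpwnorm t ht.1]
        have hF : Fn t ≤ C₀ := by
          have := hC₀ t ht.1.le
          simpa using this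
        calc t ^ (α.re - 1) * Fn t ≤ t ^ (α.re - 1) * C₀ :=
              mul_le_mul_of_nonneg_left hF (Real.rpow_nonneg ht.1.le _)
          _ = C₀ * t ^ (α.re - 1) := by ring
      · -- on Ioi 1
        set m : ℕ := ⌈α.re⌉₊ + 1 with hm
        obtain ⟨C₁, hC₁0, hC₁⟩ := decayI hn f x.1 x.2 hε m
        have hexp : α.re - 1 - m < -1 := by
          have := Nat.le_ceil α.re
          have hmc : (m:ℝ) = (⌈α.re⌉₊ : ℝ) + 1 := by rw [hm]; push_cast; ring
          rw [hmc]
          linarith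
        have hmaj : IntegrableOn (fun t : ℝ => C₁ * t ^ (α.re - 1 - m)) (Ioi 1) :=
          Integrable.const_mul (integrableOn_Ioi_rpow_of_lt hexp one_pos) C₁
        refine Integrable.mono' hmaj (hmeas.restrict) ?_
        filter_upwards [ae_restrict_mem measurableSet_Ioi] with t ht
        rw [mem_Ioi] at ht
        have ht0 : (0:ℝ) < t := by linarith
        rw [Real.norm_eq_abs, _root_.abs_of_nonneg (mul_nonneg (norm_nonneg _) (hFn0 t))]
        rw [hpwnorm t ht0]
        have hF : Fn t ≤ C₁ / (1 + t) ^ m := by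
          rw [le_div_iff₀ (by positivity), mul_comm]
          exact hC₁ t ht0.le
        have hF2 : C₁ / (1 + t) ^ m ≤ C₁ / t ^ m := by
          rw [div_le_div_iff₀ (by positivity) (by positivity)]
          exact mul_le_mul_of_nonneg_left (pow_le_pow_left₀ (by positivity) (by linarith) _) hC₁0
        have hre : t ^ (α.re - 1 - (m:ℝ)) = t ^ (α.re - 1) / t ^ (m:ℕ) := by
          rw [Real.rpow_sub ht0, Real.rpow_natCast]
        calc t ^ (α.re - 1) * Fn t ≤ t ^ (α.re - 1) * (C₁ / t ^ m) :=
              mul_le_mul_of_nonneg_left (hF.trans hF2) (Real.rpow_nonneg ht0.le _)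
          _ = C₁ * t ^ (α.re - 1 - (m:ℝ)) := by rw [hre]; ring
  -- now the computation
  calc ∫ y : Rn n, ppow σ (y.2 - ‖y.1‖ ^ 2) (α - 1) * (f (x - y))
      = ∫ y, ppow σ (y.2 - ‖y.1‖ ^ 2) (α - 1) * (f (x - y))
          ∂((volume : Measure (EuclideanSpace ℝ (Fin (n-1)))).prod (volume : Measure ℝ)) := by
        rw [← Measure.volume_eq_prod]
    _ = ∫ p, ppow σ ((shearEquiv n hε p).2 - ‖(shearEquiv n hε p).1‖ ^ 2) (α - 1)
          * (f (x - shearEquiv n hε p))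
          ∂((volume : Measure (EuclideanSpace ℝ (Fin (n-1)))).prod (volume : Measure ℝ)) :=
        ((shear_mp hε).integral_comp (shearEquiv n hε).measurableEmbedding _).symm
    _ = ∫ p, W p
          ∂((volume : Measure (EuclideanSpace ℝ (Fin (n-1)))).prod (volume : Measure ℝ)) :=
        integral_congr_ae (Eventually.of_forall hOW)
    _ = ∫ t : ℝ, ∫ y' : EuclideanSpace ℝ (Fin (n-1)), W (y', t) := integral_prod_symm W hIW
    _ = ∫ t : ℝ, pw t * gI n x.1 x.2 ε f t := by
        congr 1
        funext t
        simp only [hWdef]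
        exact integral_const_mul _ _
    _ = ∫ t in Ioi (0:ℝ), pw t * gI n x.1 x.2 ε f t := by
        refine (setIntegral_eq_integral_of_forall_compl_eq_zero fun t ht => ?_).symm
        rw [mem_Ioi, not_lt] at ht
        have : pw t = 0 := by rw [hpw]; exact if_neg (not_lt.mpr ht)
        rw [this, zero_mul]
    _ = ∫ t in Ioi (0:ℝ), (t : ℂ) ^ (α - 1) • gI n x.1 x.2 ε f t := by
        refine setIntegral_congr_fun measurableSet_Ioi fun t ht => ?_
        rw [mem_Ioi] at ht
        rw [smul_eq_mul]
        congr 1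
        rw [hpw]
        beta_reduce
        rw [if_pos ht]
        rw [Complex.cpow_def_of_ne_zero (by exact_mod_cast ne_of_gt ht), ← Complex.ofReal_log ht.le]
        congr 1
        ring
    _ = mellin (gI n x.1 x.2 ε f) α := rfl

end PPEaux

namespace PPEaux

lemma uD_zero {n : ℕ} (f : SchwartzMap (Rn n) ℂ) : uD n 0 f = f := rfl

end PPEaux

open PPEaux

/-- For every Schwartz function f, every x, and each sign, α ↦ (P_±^α f)(x) extends
to an entire function whose value at 0 is the parabolic Radon transform (Pf)(x). -/
theorem parP_entire_extension (n : ℕ) (hn : 2 ≤ n) (σ : Bool)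
    (f : SchwartzMap (Rn n) ℂ) (x : Rn n) :
    ∃ G : ℂ → ℂ, Differentiable ℂ G ∧
      (∀ α : ℂ, 0 < α.re → G α = parP n σ α (fun y => f y) x) ∧
      G 0 = parRadon n (fun y => f y) x := by
  set ε : ℝ := if σ then 1 else -1 with hεdef
  have hε : ε = 1 ∨ ε = -1 := by cases σ <;> simp [hεdef]
  set G : ℂ → ℂ := fun β => FF n x.1 x.2 ε f (⌊‖β‖⌋₊ + 1) β with hGdef
  have hre_ge : ∀ β : ℂ, -‖β‖ ≤ β.re := by
    intro β
    have h1 : |β.re| ≤ ‖β‖ := by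
      exact Complex.abs_re_le_norm β
    have h2 := neg_abs_le β.re
    linarith
  refine ⟨G, ?_, ?_, ?_⟩
  · -- differentiability
    intro α
    set K : ℕ := ⌊‖α‖⌋₊ + 2 with hK
    have hKα : -(K : ℝ) < α.re := by
      have h1 : ‖α‖ < ⌊‖α‖⌋₊ + 1 := Nat.lt_floor_add_one _
      have h2 := hre_ge α
      have : (K : ℝ) = (⌊‖α‖⌋₊ : ℝ) + 2 := by rw [hK]; push_cast; ring
      linarith
    have hEq : Set.EqOn G (FF n x.1 x.2 ε f K) (Metric.ball α 1) := by
      intro β hβ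
      have hβα : ‖β - α‖ < 1 := mem_ball_iff_norm.mp hβ
      have hβn : ‖β‖ < ‖α‖ + 1 := by
        calc ‖β‖ = ‖α + (β - α)‖ := by ring_nf
          _ ≤ ‖α‖ + ‖β - α‖ := norm_add_le _ _
          _ < ‖α‖ + 1 := by linarith
      have hk1 : ⌊‖β‖⌋₊ + 1 ≤ K := by
        have h2 : ⌊‖β‖⌋₊ ≤ ⌊‖α‖ + 1⌋₊ := Nat.floor_le_floor hβn.le
        rw [Nat.floor_add_one (norm_nonneg α)] at h2
        omega
      have hre : -((⌊‖β‖⌋₊ + 1 : ℕ) : ℝ) < β.re := by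
        have h1 : ‖β‖ < ⌊‖β‖⌋₊ + 1 := Nat.lt_floor_add_one _
        have h2 := hre_ge β
        push_cast
        linarith
      exact FF_agree hn x.1 x.2 hε f hk1 hre
    have hd := FF_diff hn x.1 x.2 hε f K hKα
    exact hd.congr_of_eventuallyEq
      (Filter.eventuallyEq_of_mem (Metric.ball_mem_nhds α one_pos) hEq)
  · -- value for Re α > 0
    intro α hα
    have h0 : G α = FF n x.1 x.2 ε f 0 α := by
      rw [hGdef]
      exact (FF_agree hn x.1 x.2 hε f (Nat.zero_le _) (by simpa using hα)).symm
    rw [h0]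
    have hfub := fubini_step hn σ f x hα
    rw [parP]
    rw [show (∫ y : Rn n, ppow σ (y.2 - ‖y.1‖ ^ 2) (α - 1) * (fun y => f y) (x - y))
        = mellin (gI n x.1 x.2 ε f) α from hfub]
    rw [FF, uD_zero]
    simp only [pow_zero, one_mul, Nat.cast_zero, add_zero, one_div]
  · -- value at 0
    have hG0 : G 0 = FF n x.1 x.2 ε f 1 0 := by
      rw [hGdef]
      norm_num
    rw [hG0]
    set g0 : ℝ → ℂ := gI n x.1 x.2 ε f with hg0
    set g1 : ℝ → ℂ := gI n x.1 x.2 ε (uD n 1 f) with hg1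
    have hder : ∀ t : ℝ, HasDerivAt g0 (-(ε:ℂ) * g1 t) t := by
      intro t
      have := gg_hasDeriv hn x.1 x.2 hε f 0 t
      rwa [uD_zero] at this
    have hψc : Continuous fun t => -(ε:ℂ) * g1 t :=
      continuous_const.mul (gg_cont hn x.1 x.2 hε f 1)
    have hint : IntegrableOn (fun t => -(ε:ℂ) * g1 t) (Ioi (0:ℝ)) := by
      have hmc := mellinConv_of_decay hψc
        (ggψ_dec hn x.1 x.2 hε f 0) (s := 1) (by norm_num)
      unfold MellinConvergent at hmc
      simpa only [sub_self, Complex.cpow_zero, one_smul] using hmc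
    have htend : Tendsto g0 atTop (𝓝 0) := by
      obtain ⟨C, hC0, hC⟩ := gg_dec hn x.1 x.2 hε f 0 1
      rw [uD_zero] at hC
      apply squeeze_zero_norm' (a := fun t : ℝ => C * (1 + t)⁻¹)
      · filter_upwards [eventually_ge_atTop (0:ℝ)] with t ht
        have h1 := hC t ht
        rw [pow_one] at h1
        rw [← hg0] at h1
        rw [mul_comm] at h1
        rw [← le_div_iff₀ (by linarith : (0:ℝ) < 1 + t)] at h1
        rw [div_eq_mul_inv] at h1
        exact h1
      · have h1 : Tendsto (fun t : ℝ => 1 + t) atTop atTop :=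
          tendsto_atTop_add_const_left _ 1 tendsto_id
        have h2 := (tendsto_inv_atTop_zero.comp h1).const_mul C
        simpa using h2
    have hcont0 : ContinuousWithinAt g0 (Ici (0:ℝ)) 0 := by
      have := gg_cont hn x.1 x.2 hε f 0
      rw [uD_zero] at this
      exact this.continuousWithinAt
    have key := integral_Ioi_of_hasDerivAt_of_tendsto hcont0
      (fun t _ => hder t) hint htend
    rw [integral_const_mul] at key
    have hval : (ε:ℂ) * ∫ t in Ioi (0:ℝ), g1 t = g0 0 := by
      linear_combination -key
    have hmel : mellin g1 1 = ∫ t in Ioi (0:ℝ), g1 t := by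
      unfold mellin
      simp only [sub_self, Complex.cpow_zero, one_smul]
    rw [FF]
    rw [show ((0:ℂ) + (1:ℕ)) = 1 by norm_num]
    rw [Complex.Gamma_one, hmel]
    rw [show ((ε:ℂ)^1 * (1:ℂ)⁻¹) = (ε:ℂ) by ring]
    rw [hval]
    rw [hg0, gI, parRadon]
    simp only [mul_zero, sub_zero]
end
end

section
/- Let α ∈ ℂ with Re α > 0, let k be a positive integer, and let f be a Schwartz function on ℝⁿ. Then for each choice of sign ± and every x ∈ ℝⁿ, (P_±^α f)(x) = (±1)^k (P_±^{α+k} (∂_n^k f))(x) = (±1)^k (∂_n^k (P_±^{α+k} f))(x), where ∂_n denotes the partial derivative in the last coordinate. -/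
open MeasureTheory Complex Filter Set

noncomputable section

/-- The partial derivative in the last coordinate, ∂ₙ. -/
def dn (n : ℕ) (g : Rn n → ℂ) : Rn n → ℂ := fun x => fderiv ℝ g x (0, 1)

/-! ### Auxiliary lemmas -/

section Aux

lemma ppow_false (t : ℝ) (l : ℂ) : ppow false t l = ppow true (-t) l := by
  simp [ppow, neg_pos]

lemma ppow_true_of_nonpos {t : ℝ} (ht : t ≤ 0) (l : ℂ) : ppow true t l = 0 := by
  simp [ppow, not_lt.2 ht]

lemma norm_ppow_le (σ : Bool) (t : ℝ) (l : ℂ) : ‖ppow σ t l‖ ≤ |t| ^ l.re := by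
  have key : ∀ s : ℝ, 0 < s → ‖Complex.exp (l * Real.log s)‖ = s ^ l.re := by
    intro s hs
    rw [Complex.norm_exp, Real.rpow_def_of_pos hs]
    congr 1
    simp [Complex.mul_re, mul_comm]
  cases σ <;> simp only [ppow, if_true, if_false, Bool.false_eq_true]
  · split_ifs with h
    · rw [key (-t) (by linarith), abs_of_neg h]
    · simp only [norm_zero]; positivity
  · split_ifs with h
    · rw [key t h, abs_of_pos h]
    · simp only [norm_zero]; positivity

lemma measurable_ppow (σ : Bool) (l : ℂ) : Measurable fun t : ℝ => ppow σ t l := by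
  have hexp : ∀ c : ℝ, Measurable fun t : ℝ => Complex.exp (l * Real.log (c * t)) := by
    intro c
    exact Complex.continuous_exp.measurable.comp
      ((Complex.measurable_ofReal.comp (Real.measurable_log.comp (measurable_const_mul c))).const_mul l)
  cases σ <;> simp only [ppow, if_true, if_false, Bool.false_eq_true]
  · refine Measurable.ite (measurableSet_lt measurable_id measurable_const) ?_ measurable_const
    simpa [neg_mul, one_mul] using hexp (-1)
  · refine Measurable.ite (measurableSet_lt measurable_const measurable_id) ?_ measurable_const
    simpa using hexp 1

lemma rpow_neg_base_mono {x y N : ℝ} (hx : 0 < x) (hxy : x ≤ y) (hN : 0 ≤ N) :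
    y ^ (-N) ≤ x ^ (-N) := by
  rw [Real.rpow_neg (hx.le.trans hxy), Real.rpow_neg hx.le]
  exact inv_anti₀ (Real.rpow_pos_of_pos hx N) (Real.rpow_le_rpow hx.le hxy hN)

lemma peetre {E : Type*} [SeminormedAddCommGroup E] {N : ℝ} (hN : 0 ≤ N) (x y : E) :
    (1 + ‖x - y‖) ^ (-N) ≤ (1 + ‖x‖) ^ N * (1 + ‖y‖) ^ (-N) := by
  have hxy : ‖y‖ ≤ ‖x‖ + ‖x - y‖ := by
    calc ‖y‖ = ‖x - (x - y)‖ := by rw [sub_sub_cancel]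
      _ ≤ ‖x‖ + ‖x - y‖ := norm_sub_le x (x - y)
  have h1 : (1 + ‖y‖) ^ N ≤ (1 + ‖x‖) ^ N * (1 + ‖x - y‖) ^ N := by
    rw [← Real.mul_rpow (by positivity) (by positivity)]
    refine Real.rpow_le_rpow (by positivity) ?_ hN
    nlinarith [norm_nonneg x, norm_nonneg (x - y)]
  have hA : (0:ℝ) < (1 + ‖x - y‖) ^ N := by positivity
  have hB : (0:ℝ) < (1 + ‖y‖) ^ N := by positivity
  rw [Real.rpow_neg (by positivity), Real.rpow_neg (by positivity),
    inv_eq_one_div, inv_eq_one_div, mul_one_div, div_le_div_iff₀ hA hB, one_mul]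
  nlinarith [hA, hB]

end Aux

section Schwartz

variable {E F : Type*} [NormedAddCommGroup E] [NormedSpace ℝ E]
  [NormedAddCommGroup F] [NormedSpace ℝ F]

lemma schwartz_decay (f : SchwartzMap E F) (N : ℝ) :
    ∃ C : ℝ, 0 ≤ C ∧ ∀ x, ‖f x‖ ≤ C * (1 + ‖x‖) ^ (-N) := by
  set k : ℕ := ⌈max N 0⌉₊ with hk
  have hNk : N ≤ (k : ℝ) := le_trans (le_max_left _ _) (Nat.le_ceil _)
  set S : ℝ := 2 ^ k * (Finset.Iic (k, 0)).sup (fun m => SchwartzMap.seminorm ℝ m.1 m.2) f with hS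
  have hS0 : 0 ≤ S := by positivity
  refine ⟨S, hS0, fun x => ?_⟩
  have hb : (1 + ‖x‖) ^ k * ‖f x‖ ≤ S := by
    have := SchwartzMap.one_add_le_sup_seminorm_apply (𝕜 := ℝ) (m := (k, 0)) le_rfl le_rfl f x
    simpa [norm_iteratedFDeriv_zero] using this
  have hx0 : (0:ℝ) < 1 + ‖x‖ := by positivity
  have h1 : (1 + ‖x‖) ^ N ≤ (1 + ‖x‖) ^ (k : ℝ) :=
    Real.rpow_le_rpow_of_exponent_le (by linarith [norm_nonneg x]) hNk
  have h2 : (1 + ‖x‖) ^ N * ‖f x‖ ≤ S := by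
    refine le_trans ?_ hb
    rw [← Real.rpow_natCast (1 + ‖x‖) k]
    exact mul_le_mul_of_nonneg_right h1 (norm_nonneg _)
  have h3 : ‖f x‖ = (1 + ‖x‖) ^ (-N) * ((1 + ‖x‖) ^ N * ‖f x‖) := by
    rw [← mul_assoc, ← Real.rpow_add hx0]
    simp
  rw [h3, mul_comm S]
  exact mul_le_mul_of_nonneg_left h2 (by positivity)

end Schwartz

/-! ### The kernel and its integrability -/

instance instHaarRn (n : ℕ) : (volume : Measure (Rn n)).IsAddHaarMeasure := by
  change ((volume : Measure (EuclideanSpace ℝ (Fin (n-1)))).prod volume).IsAddHaarMeasure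
  infer_instance

/-- The parabolic kernel. -/
def kern (n : ℕ) (σ : Bool) (α : ℂ) (y : Rn n) : ℂ := ppow σ (y.2 - ‖y.1‖ ^ 2) (α - 1)

lemma parP_eq (n : ℕ) (σ : Bool) (α : ℂ) (f : Rn n → ℂ) (x : Rn n) :
    parP n σ α f x = (1 / Complex.Gamma α) * ∫ y : Rn n, kern n σ α y * f (x - y) := rfl

lemma measurable_kern (n : ℕ) (σ : Bool) (α : ℂ) : Measurable (kern n σ α) :=
  (measurable_ppow σ (α - 1)).comp (by fun_prop)

lemma integrable_w {a : ℝ} (ha : 0 < a) :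
    Integrable (fun s : ℝ => if |s| ≤ 1 then |s| ^ (a - 1) else 0) := by
  have hrw : (fun s : ℝ => if |s| ≤ 1 then |s| ^ (a - 1) else 0)
      = Set.indicator (Icc (-1) 1) (fun s : ℝ => |s| ^ (a - 1)) := by
    funext s
    rw [Set.indicator_apply]
    exact if_congr (by rw [mem_Icc, abs_le]) rfl rfl
  rw [hrw, integrable_indicator_iff measurableSet_Icc]
  have hIoc : IntegrableOn (fun s : ℝ => |s| ^ (a - 1)) (Ioc 0 1) := by
    have h := intervalIntegral.intervalIntegrable_rpow' (a := 0) (b := 1)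
      (show (-1:ℝ) < a - 1 by linarith)
    rw [intervalIntegrable_iff_integrableOn_Ioc_of_le (by norm_num)] at h
    refine h.congr_fun (fun s hs => ?_) measurableSet_Ioc
    rw [abs_of_pos hs.1]
  have hIco : IntegrableOn (fun s : ℝ => |s| ^ (a - 1)) (Ico 0 1) := by
    rw [integrableOn_Ico_iff_integrableOn_Ioo]
    exact hIoc.mono_set Ioo_subset_Ioc_self
  have hneg : IntegrableOn (fun s : ℝ => |s| ^ (a - 1)) (Ioc (-1) 0) := by
    have hpre : (Neg.neg : ℝ → ℝ) ⁻¹' (Ico 0 1) = Ioc (-1) 0 := by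
      ext s
      simp only [mem_preimage, mem_Ico, mem_Ioc]
      constructor <;> intro hs <;> constructor <;> linarith [hs.1, hs.2]
    have := (MeasurePreserving.integrableOn_comp_preimage
      (Measure.measurePreserving_neg (volume : Measure ℝ))
      (Homeomorph.neg ℝ).measurableEmbedding).2 hIco
    rw [hpre] at this
    refine this.congr_fun (fun s _ => ?_) measurableSet_Ioc
    simp [Function.comp, abs_neg]
  rw [integrableOn_Icc_iff_integrableOn_Ioc,
    show Ioc (-1:ℝ) 1 = Ioc (-1) 0 ∪ Ioc 0 1 by rw [Set.Ioc_union_Ioc_eq_Ioc] <;> norm_num]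
  exact hneg.union hIoc

lemma finrank_Rn {n : ℕ} (hn : 2 ≤ n) : (Module.finrank ℝ (Rn n) : ℝ) ≤ n := by
  rw [Module.finrank_prod, finrank_euclideanSpace]
  simp only [Fintype.card_fin, Module.finrank_self]
  have : (n - 1) + 1 ≤ n := by omega
  exact_mod_cast this

/-- Master integrability lemma for the parabolic kernel against polynomial decay. -/
lemma integrable_kern_decay {n : ℕ} (hn : 2 ≤ n) (σ : Bool) (α : ℂ) (hα : 0 < α.re) :
    Integrable (fun y : Rn n =>
      ‖kern n σ α y‖ * (1 + ‖y‖) ^ (-(2 * (n:ℝ) + 2 * α.re + 2))) := by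
  set a : ℝ := α.re with ha
  set N : ℝ := 2 * (n:ℝ) + 2 * a + 2 with hN
  have hN0 : 0 ≤ N := by
    have : (0:ℝ) ≤ (n:ℝ) := Nat.cast_nonneg n
    simp only [hN]; linarith
  set w : ℝ → ℝ := fun s => if |s| ≤ 1 then |s| ^ (a - 1) else 0 with hw
  have hw_nonneg : ∀ s, 0 ≤ w s := by
    intro s; simp only [hw]; split_ifs <;> positivity
  have hw_meas : Measurable w := by
    refine Measurable.ite (measurableSet_le (by fun_prop) measurable_const) (by fun_prop)
      measurable_const
  have hw_int : Integrable w := integrable_w hα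
  -- the two dominating pieces
  have hg2 : Integrable (fun y : Rn n => (1 + ‖y‖) ^ (-(2 * (n:ℝ) + 2))) := by
    refine integrable_one_add_norm ?_
    have := finrank_Rn hn
    linarith [(by positivity : (0:ℝ) ≤ (n:ℝ))]
  have hg1 : Integrable (fun y : Rn n => w (y.2 - ‖y.1‖ ^ 2) * (1 + ‖y.1‖) ^ (-N)) := by
    rw [show (volume : Measure (Rn n)) = (volume).prod volume from rfl]
    have hmeas : AEStronglyMeasurable
        (fun y : Rn n => w (y.2 - ‖y.1‖ ^ 2) * (1 + ‖y.1‖) ^ (-N))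
        ((volume : Measure (EuclideanSpace ℝ (Fin (n-1)))).prod volume) := by
      refine Measurable.aestronglyMeasurable ?_
      exact (hw_meas.comp (by fun_prop)).mul (by fun_prop)
    rw [integrable_prod_iff hmeas]
    constructor
    · refine ae_of_all _ fun y1 => ?_
      show Integrable (fun t : ℝ => w (t - ‖y1‖ ^ 2) * (1 + ‖y1‖) ^ (-N)) volume
      exact (hw_int.comp_sub_right (‖y1‖ ^ 2)).mul_const ((1 + ‖y1‖) ^ (-N))
    · have hval : ∀ y1 : EuclideanSpace ℝ (Fin (n-1)),
          (∫ t : ℝ, ‖w (t - ‖y1‖ ^ 2) * (1 + ‖y1‖) ^ (-N)‖)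
            = (∫ s : ℝ, w s) * (1 + ‖y1‖) ^ (-N) := by
        intro y1
        have h1 : ∀ t : ℝ, ‖w (t - ‖y1‖ ^ 2) * (1 + ‖y1‖) ^ (-N)‖
            = w (t - ‖y1‖ ^ 2) * (1 + ‖y1‖) ^ (-N) := by
          intro t
          rw [Real.norm_eq_abs, _root_.abs_of_nonneg (mul_nonneg (hw_nonneg _) (by positivity))]
        simp_rw [h1]
        rw [integral_mul_const]
        congr 1
        exact integral_sub_right_eq_self w (‖y1‖ ^ 2)
      show Integrable (fun y1 => ∫ t : ℝ, ‖w (t - ‖y1‖ ^ 2) * (1 + ‖y1‖) ^ (-N)‖) volume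
      refine (Integrable.congr ?_ (ae_of_all _ fun y1 => (hval y1).symm))
      exact (integrable_one_add_norm (by
        rw [finrank_euclideanSpace]
        simp only [Fintype.card_fin]
        have h1 : ((n - 1 : ℕ) : ℝ) ≤ (n:ℝ) := by exact_mod_cast Nat.sub_le n 1
        have : (0:ℝ) ≤ (n:ℝ) := Nat.cast_nonneg n
        simp only [hN]; linarith)).const_mul _
  refine (hg1.add hg2).mono' ?_ (ae_of_all _ fun y => ?_)
  · exact ((measurable_kern n σ α).norm.mul (by fun_prop)).aestronglyMeasurable
  · simp only [Pi.add_apply]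
    set s : ℝ := y.2 - ‖y.1‖ ^ 2 with hs
    have hknorm : ‖kern n σ α y‖ ≤ |s| ^ (a - 1) := by
      have := norm_ppow_le σ s (α - 1)
      simpa [kern, Complex.sub_re, ha] using this
    have htarget_nonneg : (0:ℝ) ≤ ‖kern n σ α y‖ * (1 + ‖y‖) ^ (-N) := by positivity
    rw [Real.norm_eq_abs, _root_.abs_of_nonneg htarget_nonneg]
    have hy1 : ‖y.1‖ ≤ ‖y‖ := norm_fst_le y
    have hy2 : |y.2| ≤ ‖y‖ := norm_snd_le y
    by_cases hcase : |s| ≤ 1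
    · have h1 : ‖kern n σ α y‖ * (1 + ‖y‖) ^ (-N) ≤ w s * (1 + ‖y.1‖) ^ (-N) := by
        have h2 : (1 + ‖y‖) ^ (-N) ≤ (1 + ‖y.1‖) ^ (-N) :=
          rpow_neg_base_mono (by positivity) (by linarith) hN0
        have hws : w s = |s| ^ (a - 1) := if_pos hcase
        rw [hws]
        exact mul_le_mul hknorm h2 (by positivity) (by positivity)
      have : (0:ℝ) ≤ (1 + ‖y‖) ^ (-(2 * (n:ℝ) + 2)) := by positivity
      linarith
    · push_neg at hcase
      have h1 : ‖kern n σ α y‖ ≤ (1 + ‖y‖) ^ (2 * a) := by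
        have h2 : |s| ^ (a - 1) ≤ |s| ^ a :=
          Real.rpow_le_rpow_of_exponent_le hcase.le (by linarith)
        have h3 : |s| ≤ (1 + ‖y‖) ^ (2:ℕ) := by
          have h4 : |s| ≤ |y.2| + ‖y.1‖ ^ 2 := by
            have := abs_sub y.2 (‖y.1‖ ^ 2)
            simpa [hs, _root_.abs_of_nonneg (sq_nonneg ‖y.1‖)] using this
          have h5 : (1 + ‖y‖) ^ (2:ℕ) = 1 + 2 * ‖y‖ + ‖y‖ ^ 2 := by ring
          nlinarith [norm_nonneg y, mul_self_le_mul_self (norm_nonneg y.1) hy1,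
            sq_nonneg ‖y.1‖, sq_nonneg ‖y‖]
        have h6 : |s| ^ a ≤ ((1 + ‖y‖) ^ (2:ℕ)) ^ a :=
          Real.rpow_le_rpow (abs_nonneg s) h3 (by linarith)
        have h7 : ((1 + ‖y‖) ^ (2:ℕ)) ^ a = (1 + ‖y‖) ^ (2 * a) := by
          rw [← Real.rpow_natCast (1 + ‖y‖) 2, ← Real.rpow_mul (by positivity)]
          norm_num
        calc ‖kern n σ α y‖ ≤ |s| ^ (a - 1) := hknorm
          _ ≤ |s| ^ a := h2
          _ ≤ (1 + ‖y‖) ^ (2 * a) := h7 ▸ h6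
      have h8 : ‖kern n σ α y‖ * (1 + ‖y‖) ^ (-N)
          ≤ (1 + ‖y‖) ^ (-(2 * (n:ℝ) + 2)) := by
        calc ‖kern n σ α y‖ * (1 + ‖y‖) ^ (-N)
            ≤ (1 + ‖y‖) ^ (2 * a) * (1 + ‖y‖) ^ (-N) :=
              mul_le_mul_of_nonneg_right h1 (by positivity)
          _ = (1 + ‖y‖) ^ (2 * a + -N) := (Real.rpow_add (by positivity) _ _).symm
          _ = (1 + ‖y‖) ^ (-(2 * (n:ℝ) + 2)) := by rw [hN]; ring_nf
      have h9 : 0 ≤ w s * (1 + ‖y.1‖) ^ (-N) := mul_nonneg (hw_nonneg _) (by positivity)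
      linarith

/-- Integrability of the kernel times a translated Schwartz function. -/
lemma integrable_kern_schwartz {n : ℕ} (hn : 2 ≤ n) (σ : Bool) (α : ℂ) (hα : 0 < α.re)
    (f : SchwartzMap (Rn n) ℂ) (x : Rn n) :
    Integrable (fun y : Rn n => kern n σ α y * f (x - y)) := by
  set N : ℝ := 2 * (n:ℝ) + 2 * α.re + 2 with hN
  have hN0 : 0 ≤ N := by
    have : (0:ℝ) ≤ (n:ℝ) := Nat.cast_nonneg n
    simp only [hN]; linarith
  obtain ⟨C, hC, hCf⟩ := schwartz_decay f N
  refine ((integrable_kern_decay hn σ α hα).const_mul (C * (1 + ‖x‖) ^ N)).mono' ?_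
    (ae_of_all _ fun y => ?_)
  · exact ((measurable_kern n σ α).aestronglyMeasurable.mul
      ((f.continuous.comp (continuous_const.sub continuous_id)).aestronglyMeasurable))
  · rw [norm_mul]
    have h1 : ‖f (x - y)‖ ≤ C * ((1 + ‖x‖) ^ N * (1 + ‖y‖) ^ (-N)) := by
      refine (hCf (x - y)).trans ?_
      exact mul_le_mul_of_nonneg_left (peetre hN0 x y) hC
    calc ‖kern n σ α y‖ * ‖f (x - y)‖
        ≤ ‖kern n σ α y‖ * (C * ((1 + ‖x‖) ^ N * (1 + ‖y‖) ^ (-N))) :=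
          mul_le_mul_of_nonneg_left h1 (norm_nonneg _)
      _ = C * (1 + ‖x‖) ^ N * (‖kern n σ α y‖ * (1 + ‖y‖) ^ (-N)) := by ring

/-! ### One-dimensional integration by parts -/

lemma hasDerivAt_ppow_true (β : ℂ) {c t : ℝ} (ht : c < t) :
    HasDerivAt (fun u => ppow true (u - c) β) (β * ppow true (t - c) (β - 1)) t := by
  have h0 : (0:ℝ) < t - c := sub_pos.2 ht
  set L : ℂ := ((Real.log (t - c) : ℝ) : ℂ) with hL
  have hlog : HasDerivAt (fun u : ℝ => Real.log (u - c)) ((t - c)⁻¹) t := by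
    simpa [Function.comp_def] using (Real.hasDerivAt_log (ne_of_gt h0)).comp t ((hasDerivAt_id t).sub_const c)
  have h2 : HasDerivAt (fun u : ℝ => Complex.exp (β * (Real.log (u - c) : ℂ)))
      (Complex.exp (β * L) * (β * ((t - c : ℝ) : ℂ)⁻¹)) t :=
    HasDerivAt.cexp (by simpa using (hlog.ofReal_comp).const_mul β)
  have key : Complex.exp (β * L) * (β * ((t - c : ℝ) : ℂ)⁻¹)
      = β * ppow true (t - c) (β - 1) := by
    have hppow : ppow true (t - c) (β - 1) = Complex.exp ((β - 1) * L) := by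
      simp [ppow, h0, hL]
    have hs : ((t - c : ℝ) : ℂ) = Complex.exp L := by
      rw [hL, ← Complex.ofReal_exp, Real.exp_log h0]
    rw [hppow, hs, ← Complex.exp_neg]
    rw [show Complex.exp (β * L) * (β * Complex.exp (-L))
        = β * (Complex.exp (β * L) * Complex.exp (-L)) from by ring, ← Complex.exp_add]
    congr 2
    ring
  have hev : (fun u => ppow true (u - c) β)
      =ᶠ[nhds t] fun u : ℝ => Complex.exp (β * (Real.log (u - c) : ℂ)) := by
    filter_upwards [Ioi_mem_nhds ht] with u hu
    simp [ppow, sub_pos.2 (show c < u from hu)]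
  have h3 := h2.congr_of_eventuallyEq hev
  rwa [key] at h3

lemma tendsto_bot_aux (β : ℂ) (hβ : 0 < β.re) (c : ℝ) (h : ℝ → ℂ) (B : ℝ)
    (hB : ∀ t, ‖h t‖ ≤ B) :
    Tendsto (fun t => ppow true (t - c) β * h t) (nhdsWithin c (Ioi c)) (nhds 0) := by
  have hB0 : 0 ≤ B := le_trans (norm_nonneg (h c)) (hB c)
  refine squeeze_zero_norm (a := fun t => |t - c| ^ β.re * B) (fun t => ?_) ?_
  · rw [norm_mul]
    exact mul_le_mul (norm_ppow_le true (t - c) β) (hB t) (norm_nonneg _) (by positivity)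
  · have h1 : Tendsto (fun t : ℝ => |t - c|) (nhdsWithin c (Ioi c)) (nhds 0) := by
      have := ((continuous_abs.comp (continuous_sub_right c)).tendsto c)
      simp only [Function.comp, sub_self, abs_zero] at this
      exact this.mono_left nhdsWithin_le_nhds
    have h2 : Tendsto (fun t : ℝ => |t - c| ^ β.re) (nhdsWithin c (Ioi c)) (nhds 0) := by
      have hcont := (Real.continuousAt_rpow_const 0 β.re (Or.inr hβ.le)).tendsto
      have := hcont.comp h1
      simpa [Function.comp_def, Real.zero_rpow (ne_of_gt hβ)] using this
    simpa using h2.mul_const B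

lemma tendsto_top_aux (β : ℂ) (hβ : 0 < β.re) (c d C : ℝ) (hC : 0 ≤ C) (h : ℝ → ℂ)
    (hdec : ∀ t, ‖h t‖ ≤ C * (1 + |t - d|) ^ (-(β.re + 1))) :
    Tendsto (fun t => ppow true (t - c) β * h t) atTop (nhds 0) := by
  refine squeeze_zero_norm
    (a := fun t => C * ((1 + |d - c|) ^ β.re * (1 + |t - d|)⁻¹)) (fun t => ?_) ?_
  · have hx : (0:ℝ) < 1 + |t - d| := by positivity
    have key : |t - c| ^ β.re * (1 + |t - d|) ^ (-(β.re + 1))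
        ≤ (1 + |d - c|) ^ β.re * (1 + |t - d|)⁻¹ := by
      have h1 : |t - c| ^ β.re ≤ (1 + |d - c|) ^ β.re * (1 + |t - d|) ^ β.re := by
        rw [← Real.mul_rpow (by positivity) (by positivity)]
        refine Real.rpow_le_rpow (abs_nonneg _) ?_ hβ.le
        have := abs_sub_le t d c
        nlinarith [abs_nonneg (t - d), abs_nonneg (d - c)]
      have h2 : (1 + |t - d|) ^ (-(β.re + 1))
          = ((1 + |t - d|) ^ β.re)⁻¹ * (1 + |t - d|)⁻¹ := by
        rw [← Real.rpow_neg_one (1 + |t - d|), ← Real.rpow_neg hx.le, ← Real.rpow_add hx]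
        congr 1
        ring
      calc |t - c| ^ β.re * (1 + |t - d|) ^ (-(β.re + 1))
          = |t - c| ^ β.re * ((1 + |t - d|) ^ β.re)⁻¹ * (1 + |t - d|)⁻¹ := by
            rw [h2]; ring
        _ ≤ ((1 + |d - c|) ^ β.re * (1 + |t - d|) ^ β.re) * ((1 + |t - d|) ^ β.re)⁻¹
              * (1 + |t - d|)⁻¹ := by gcongr
        _ = (1 + |d - c|) ^ β.re * (1 + |t - d|)⁻¹ := by
            field_simp
    calc ‖ppow true (t - c) β * h t‖
        ≤ |t - c| ^ β.re * (C * (1 + |t - d|) ^ (-(β.re + 1))) := by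
          rw [norm_mul]
          exact mul_le_mul (norm_ppow_le true (t - c) β) (hdec t) (norm_nonneg _)
            (by positivity)
      _ = C * (|t - c| ^ β.re * (1 + |t - d|) ^ (-(β.re + 1))) := by ring
      _ ≤ C * ((1 + |d - c|) ^ β.re * (1 + |t - d|)⁻¹) :=
          mul_le_mul_of_nonneg_left key hC
  · have h1 : Tendsto (fun t : ℝ => (1 + |t - d|)⁻¹) atTop (nhds 0) := by
      refine tendsto_inv_atTop_zero.comp ?_
      refine tendsto_atTop_add_const_left _ 1 ?_
      have h0 : Tendsto (fun t : ℝ => t - d) atTop atTop :=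
        (tendsto_atTop_add_const_right atTop (-d) tendsto_id).congr
          (fun t => (sub_eq_add_neg t d).symm)
      exact tendsto_abs_atTop_atTop.comp h0
    simpa using (h1.const_mul ((1 + |d - c|) ^ β.re)).const_mul C

lemma ibp_true (β : ℂ) (hβ : 0 < β.re) (c : ℝ) (h h' : ℝ → ℂ)
    (hd : ∀ t, HasDerivAt h (h' t) t)
    (hint1 : Integrable fun t => ppow true (t - c) (β - 1) * h t)
    (hint2 : Integrable fun t => ppow true (t - c) β * h' t)
    (hbot : Tendsto (fun t => ppow true (t - c) β * h t) (nhdsWithin c (Ioi c)) (nhds 0))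
    (htop : Tendsto (fun t => ppow true (t - c) β * h t) atTop (nhds 0)) :
    ∫ t, ppow true (t - c) (β - 1) * h t = -β⁻¹ * ∫ t, ppow true (t - c) β * h' t := by
  have hβ0 : β ≠ 0 := fun hz => by simp [hz] at hβ
  set G : ℝ → ℂ := fun t => β⁻¹ * (ppow true (t - c) β * h t) with hGdef
  set g : ℝ → ℂ := fun t => ppow true (t - c) (β - 1) * h t
    + β⁻¹ * (ppow true (t - c) β * h' t) with hgdef
  have hGc : G c = 0 := by
    have h0 : ppow true (0:ℝ) β = 0 := ppow_true_of_nonpos le_rfl β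
    simp [hGdef, h0]
  have hderiv : ∀ t ∈ Ioi c, HasDerivAt G (g t) t := by
    intro t ht
    have h1 := ((hasDerivAt_ppow_true β ht).mul (hd t)).const_mul β⁻¹
    have h2 : β⁻¹ * (β * ppow true (t - c) (β - 1) * h t + ppow true (t - c) β * h' t)
        = g t := by
      simp only [hgdef]
      field_simp
    rwa [h2] at h1
  have hcont : ContinuousWithinAt G (Ici c) c := by
    have hIci : Ici c = {c} ∪ Ioi c := by
      ext u
      simp [le_iff_eq_or_lt, eq_comm]
    rw [ContinuousWithinAt, hGc, hIci, nhdsWithin_union, nhdsWithin_singleton]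
    refine tendsto_sup.2 ⟨?_, ?_⟩
    · have := tendsto_pure_nhds G c
      rwa [hGc] at this
    · simpa using hbot.const_mul β⁻¹
  have hGtop : Tendsto G atTop (nhds 0) := by
    simpa using htop.const_mul β⁻¹
  have hintg : IntegrableOn g (Ioi c) :=
    ((hint1.add (hint2.const_mul β⁻¹)).integrableOn)
  have key := integral_Ioi_of_hasDerivAt_of_tendsto hcont hderiv hintg hGtop
  rw [hGc, sub_zero] at key
  have e1 : ∫ t in Ioi c, g t
      = (∫ t in Ioi c, ppow true (t - c) (β - 1) * h t)
        + β⁻¹ * ∫ t in Ioi c, ppow true (t - c) β * h' t := by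
    rw [integral_add hint1.integrableOn (hint2.const_mul β⁻¹).integrableOn,
      integral_const_mul]
  have hvanish : ∀ (γ : ℂ) (q : ℝ → ℂ), ∀ t ∉ Ioi c, ppow true (t - c) γ * q t = 0 := by
    intro γ q t ht
    rw [ppow_true_of_nonpos (by simpa using ht), zero_mul]
  have e2 := setIntegral_eq_integral_of_forall_compl_eq_zero
    (f := fun t => ppow true (t - c) (β - 1) * h t) (μ := volume) (hvanish (β-1) h)
  have e3 := setIntegral_eq_integral_of_forall_compl_eq_zero
    (f := fun t => ppow true (t - c) β * h' t) (μ := volume) (hvanish β h')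
  rw [e1, e2, e3] at key
  linear_combination key

lemma inner_ibp (σ : Bool) (β : ℂ) (hβ : 0 < β.re) (c : ℝ) (h h' : ℝ → ℂ)
    (hd : ∀ t, HasDerivAt h (h' t) t)
    (hint1 : Integrable fun t => ppow σ (t - c) (β - 1) * h t)
    (hint2 : Integrable fun t => ppow σ (t - c) β * h' t)
    (C d : ℝ) (hC : 0 ≤ C)
    (hdec : ∀ t, ‖h t‖ ≤ C * (1 + |t - d|) ^ (-(β.re + 1))) :
    ∫ t, ppow σ (t - c) (β - 1) * h t
      = (if σ then 1 else -1 : ℂ) * β⁻¹ * ∫ t, ppow σ (t - c) β * (-(h' t)) := by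
  have hbnd : ∀ t, ‖h t‖ ≤ C := by
    intro t
    refine (hdec t).trans ?_
    have : (1 + |t - d|) ^ (-(β.re + 1)) ≤ 1 := by
      refine Real.rpow_le_one_of_one_le_of_nonpos (by linarith [abs_nonneg (t - d)])
        (by linarith)
    exact mul_le_of_le_one_right hC this
  cases σ
  · -- σ = false : reflect
    set q : ℝ → ℂ := fun u => h (-u) with hq
    set q' : ℝ → ℂ := fun u => -h' (-u) with hq'
    have hdq : ∀ u, HasDerivAt q (q' u) u := by
      intro u
      have := (hd (-u)).scomp u (hasDerivAt_neg u)
      simpa [hq, hq', Function.comp_def] using this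
    have hflip : ∀ (l : ℂ) (t : ℝ), ppow false (-t - c) l = ppow true (t + c) l := by
      intro l t
      rw [ppow_false, show -(-t - c) = t + c from by ring]
    have hi1 : Integrable fun u => ppow true (u - (-c)) (β - 1) * q u := by
      have := hint1.comp_neg
      refine this.congr (ae_of_all _ fun u => ?_)
      simp only [hq]
      rw [hflip, sub_neg_eq_add]
    have hi2 : Integrable fun u => ppow true (u - (-c)) β * q' u := by
      have hI := hint2.comp_neg.neg
      refine hI.congr (ae_of_all _ fun u => ?_)
      simp only [Pi.neg_apply, hq']
      rw [hflip β u, sub_neg_eq_add]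
      ring
    have hdecq : ∀ u, ‖q u‖ ≤ C * (1 + |u - (-d)|) ^ (-(β.re + 1)) := by
      intro u
      have h1 := hdec (-u)
      have h2 : |(-u) - d| = |u - (-d)| := by
        rw [show -u - d = -(u - -d) from by ring, abs_neg]
      rw [h2] at h1
      exact h1
    have hbotq := tendsto_bot_aux β hβ (-c) q C (fun u => hbnd (-u))
    have htopq := tendsto_top_aux β hβ (-c) (-d) C hC q hdecq
    have := ibp_true β hβ (-c) q q' hdq hi1 hi2 hbotq htopq
    have hback : ∀ (l : ℂ) (t : ℝ), ppow true (-t + c) l = ppow false (t - c) l := by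
      intro l t
      rw [← hflip l (-t), neg_neg]
    have eL : ∫ t, ppow false (t - c) (β - 1) * h t
        = ∫ u, ppow true (u - (-c)) (β - 1) * q u := by
      rw [← integral_neg_eq_self (fun u => ppow true (u - (-c)) (β - 1) * q u) volume]
      refine integral_congr_ae (ae_of_all _ fun t => ?_)
      simp only [hq]
      rw [sub_neg_eq_add, hback (β - 1) t, neg_neg]
    have eR : ∫ t, ppow false (t - c) β * (-(h' t))
        = ∫ u, ppow true (u - (-c)) β * q' u := by
      rw [← integral_neg_eq_self (fun u => ppow true (u - (-c)) β * q' u) volume]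
      refine integral_congr_ae (ae_of_all _ fun t => ?_)
      simp only [hq']
      rw [sub_neg_eq_add, hback β t, neg_neg]
    rw [eL, this, eR]
    simp only [Bool.false_eq_true, if_false]
    ring
  · -- σ = true
    have hbot := tendsto_bot_aux β hβ c h C hbnd
    have htop := tendsto_top_aux β hβ c d C hC h hdec
    have := ibp_true β hβ c h h' hd hint1 hint2 hbot htop
    rw [this]
    rw [show (fun t => ppow true (t - c) β * (-(h' t)))
        = fun t => -(ppow true (t - c) β * h' t) from funext fun t => by ring,
      integral_neg]
    simp only [if_true]
    ring


/-! ### The two reduction steps -/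

lemma pderiv_apply_aux {n : ℕ} (m : Rn n) (f : SchwartzMap (Rn n) ℂ) (x : Rn n) :
    LineDeriv.lineDerivOpCLM ℝ (SchwartzMap (Rn n) ℂ) m f x = fderiv ℝ (⇑f) x m := rfl

lemma re_add_one {α : ℂ} (hα : 0 < α.re) : 0 < (α + 1).re := by
  simp only [Complex.add_re, Complex.one_re]; linarith

lemma step1 {n : ℕ} (hn : 2 ≤ n) (σ : Bool) (α : ℂ) (hα : 0 < α.re)
    (f : SchwartzMap (Rn n) ℂ) (x : Rn n) :
    parP n σ α (⇑f) x
      = (if σ then 1 else -1 : ℂ)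
        * parP n σ (α + 1) (⇑(LineDeriv.lineDerivOpCLM ℝ (SchwartzMap (Rn n) ℂ) ((0, 1) : Rn n) f)) x := by
  set g := LineDeriv.lineDerivOpCLM ℝ (SchwartzMap (Rn n) ℂ) ((0, 1) : Rn n) f with hg
  have hα1 : 0 < (α + 1).re := re_add_one hα
  have hα0 : α ≠ 0 := fun hz => by simp [hz] at hα
  have hΓ : Complex.Gamma α ≠ 0 := Complex.Gamma_ne_zero_of_re_pos hα
  have intA : Integrable (fun y : Rn n => kern n σ α y * f (x - y)) :=
    integrable_kern_schwartz hn σ α hα f x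
  have intB : Integrable (fun y : Rn n => kern n σ (α + 1) y * g (x - y)) :=
    integrable_kern_schwartz hn σ (α + 1) hα1 g x
  obtain ⟨C, hC, hCf⟩ := schwartz_decay f (α.re + 1)
  have sectA : ∀ᵐ y1 : EuclideanSpace ℝ (Fin (n - 1)),
      Integrable (fun t : ℝ => kern n σ α (y1, t) * f (x - (y1, t))) :=
    (intA : Integrable _
      ((volume : Measure (EuclideanSpace ℝ (Fin (n - 1)))).prod volume)).prod_right_ae
  have sectB : ∀ᵐ y1 : EuclideanSpace ℝ (Fin (n - 1)),
      Integrable (fun t : ℝ => kern n σ (α + 1) (y1, t) * g (x - (y1, t))) :=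
    (intB : Integrable _
      ((volume : Measure (EuclideanSpace ℝ (Fin (n - 1)))).prod volume)).prod_right_ae
  have key : ∀ᵐ y1 : EuclideanSpace ℝ (Fin (n - 1)),
      (∫ t : ℝ, kern n σ α (y1, t) * f (x - (y1, t)))
        = ((if σ then 1 else -1 : ℂ) * α⁻¹)
            * ∫ t : ℝ, kern n σ (α + 1) (y1, t) * g (x - (y1, t)) := by
    filter_upwards [sectA, sectB] with y1 h1 h2
    set c : ℝ := ‖y1‖ ^ 2 with hc
    have hderiv : ∀ t : ℝ, HasDerivAt (fun t : ℝ => f (x - (y1, t)))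
        (-(g (x - (y1, t)))) t := by
      intro t
      have hφ : HasDerivAt (fun t : ℝ => x - (y1, t)) (-((0, 1) : Rn n)) t :=
        (((hasDerivAt_const t y1).prodMk (hasDerivAt_id t))).const_sub x
      have hcomp := HasFDerivAt.comp_hasDerivAt t
        (f.differentiableAt.hasFDerivAt (x := x - (y1, t))) hφ
      have heq : fderiv ℝ (⇑f) (x - (y1, t)) (-((0, 1) : Rn n)) = -(g (x - (y1, t))) := by
        rw [map_neg, hg, pderiv_apply_aux]
      rw [heq] at hcomp
      exact hcomp
    have hdec : ∀ t : ℝ, ‖f (x - (y1, t))‖ ≤ C * (1 + |t - x.2|) ^ (-(α.re + 1)) := by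
      intro t
      refine (hCf (x - (y1, t))).trans ?_
      refine mul_le_mul_of_nonneg_left ?_ hC
      refine rpow_neg_base_mono (by positivity) ?_ (by linarith)
      have h3 : |t - x.2| = |(x - (y1, t)).2| := by
        rw [show (x - (y1, t)).2 = x.2 - t from rfl, abs_sub_comm]
      rw [h3]
      have h4 := norm_snd_le (x - (y1, t))
      rw [Real.norm_eq_abs] at h4
      linarith
    have hint2' : Integrable fun t : ℝ => ppow σ (t - c) α * (-(g (x - (y1, t)))) := by
      have h4 : ∀ t : ℝ, ppow σ (t - c) α * (-(g (x - (y1, t))))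
          = -(kern n σ (α + 1) (y1, t) * g (x - (y1, t))) := by
        intro t
        rw [show kern n σ (α + 1) (y1, t) = ppow σ (t - c) ((α + 1) - 1) from rfl,
          add_sub_cancel_right]
        ring
      exact (h2.neg.congr (ae_of_all _ fun t => (h4 t).symm))
    have happ := inner_ibp σ α hα c (fun t => f (x - (y1, t)))
      (fun t => -(g (x - (y1, t)))) hderiv h1 hint2' C x.2 hC hdec
    simp only [neg_neg] at happ
    have hfix : (fun t : ℝ => kern n σ (α + 1) (y1, t) * g (x - (y1, t)))
        = fun t : ℝ => ppow σ (t - c) α * g (x - (y1, t)) := by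
      funext t
      rw [show kern n σ (α + 1) (y1, t) = ppow σ (t - c) ((α + 1) - 1) from rfl,
        add_sub_cancel_right]
    rw [show (fun t : ℝ => kern n σ α (y1, t) * f (x - (y1, t)))
        = fun t : ℝ => ppow σ (t - c) (α - 1) * f (x - (y1, t)) from rfl, hfix]
    rw [happ]
  have eA : (∫ y : Rn n, kern n σ α y * f (x - y))
      = ∫ y1, ∫ t, kern n σ α (y1, t) * f (x - (y1, t)) :=
    integral_prod _ intA
  have eB : (∫ y : Rn n, kern n σ (α + 1) y * g (x - y))
      = ∫ y1, ∫ t, kern n σ (α + 1) (y1, t) * g (x - (y1, t)) :=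
    integral_prod _ intB
  rw [parP_eq, parP_eq, eA, eB, integral_congr_ae key, integral_const_mul,
    Complex.Gamma_add_one α hα0]
  field_simp

lemma step2 {n : ℕ} (hn : 2 ≤ n) (σ : Bool) (β : ℂ) (hβ : 0 < β.re)
    (f : SchwartzMap (Rn n) ℂ) (x₀ : Rn n) :
    dn n (parP n σ β (⇑f)) x₀
      = parP n σ β (⇑(LineDeriv.lineDerivOpCLM ℝ (SchwartzMap (Rn n) ℂ) ((0, 1) : Rn n) f)) x₀ := by
  set N : ℝ := 2 * (n : ℝ) + 2 * β.re + 2 with hN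
  have hN0 : 0 ≤ N := by
    have : (0:ℝ) ≤ (n:ℝ) := Nat.cast_nonneg n
    simp only [hN]; linarith
  obtain ⟨C, hC, hCf⟩ := schwartz_decay (SchwartzMap.fderivCLM ℝ (Rn n) ℂ f) N
  set K : ℝ := C * (2 + ‖x₀‖) ^ N with hK
  have hK0 : 0 ≤ K := by positivity
  set F' : Rn n → Rn n → (Rn n →L[ℝ] ℂ) :=
    fun x y => kern n σ β y • fderiv ℝ (⇑f) (x - y) with hF'
  have hbound : ∀ y : Rn n, ∀ x ∈ Metric.ball x₀ 1,
      ‖F' x y‖ ≤ K * (‖kern n σ β y‖ * (1 + ‖y‖) ^ (-N)) := by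
    intro y x hx
    refine le_trans (norm_smul_le (kern n σ β y) (fderiv ℝ (⇑f) (x - y))) ?_
    have h1 : ‖fderiv ℝ (⇑f) (x - y)‖ ≤ C * (1 + ‖x - y‖) ^ (-N) := by
      have := hCf (x - y)
      rwa [SchwartzMap.fderivCLM_apply] at this
    have hxn : ‖x‖ ≤ 1 + ‖x₀‖ := by
      have h2 := mem_ball_iff_norm.1 hx
      have h3 := norm_sub_norm_le x x₀
      linarith
    have h2 : (1 + ‖x - y‖) ^ (-N) ≤ (1 + ‖x‖) ^ N * (1 + ‖y‖) ^ (-N) := peetre hN0 x y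
    have h3 : (1 + ‖x‖) ^ N ≤ (2 + ‖x₀‖) ^ N :=
      Real.rpow_le_rpow (by positivity) (by linarith) hN0
    calc ‖kern n σ β y‖ * ‖fderiv ℝ (⇑f) (x - y)‖
        ≤ ‖kern n σ β y‖ * (C * ((1 + ‖x‖) ^ N * (1 + ‖y‖) ^ (-N))) := by
          refine mul_le_mul_of_nonneg_left (h1.trans ?_) (norm_nonneg _)
          exact mul_le_mul_of_nonneg_left h2 hC
      _ ≤ ‖kern n σ β y‖ * (C * ((2 + ‖x₀‖) ^ N * (1 + ‖y‖) ^ (-N))) := by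
          refine mul_le_mul_of_nonneg_left ?_ (norm_nonneg _)
          refine mul_le_mul_of_nonneg_left ?_ hC
          exact mul_le_mul_of_nonneg_right h3 (by positivity)
      _ = K * (‖kern n σ β y‖ * (1 + ‖y‖) ^ (-N)) := by rw [hK]; ring
  have hbound_int : Integrable
      (fun y : Rn n => K * (‖kern n σ β y‖ * (1 + ‖y‖) ^ (-N))) :=
    (integrable_kern_decay hn σ β hβ).const_mul K
  have hfc : Continuous fun z : Rn n => fderiv ℝ (⇑f) z := by
    have hcont := (SchwartzMap.fderivCLM ℝ (Rn n) ℂ f).continuous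
    exact hcont.congr fun z => SchwartzMap.fderivCLM_apply ℝ f z
  have hF'meas : AEStronglyMeasurable (F' x₀) volume := by
    refine AEStronglyMeasurable.smul (measurable_kern n σ β).aestronglyMeasurable ?_
    exact (hfc.comp (continuous_const.sub continuous_id)).aestronglyMeasurable
  have hFmeas : ∀ x : Rn n,
      AEStronglyMeasurable (fun y : Rn n => kern n σ β y * f (x - y)) volume :=
    fun x => ((measurable_kern n σ β).aestronglyMeasurable.mul
      ((f.continuous.comp (continuous_const.sub continuous_id)).aestronglyMeasurable))
  have hdiff : ∀ y : Rn n, ∀ x ∈ Metric.ball x₀ 1,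
      HasFDerivAt (fun x => kern n σ β y * f (x - y)) (F' x y) x := by
    intro y x hx
    have h1 : HasFDerivAt (fun x : Rn n => x - y) (ContinuousLinearMap.id ℝ (Rn n)) x :=
      (hasFDerivAt_id x).sub_const y
    have h2 := (f.differentiableAt.hasFDerivAt (x := x - y)).comp x h1
    rw [ContinuousLinearMap.comp_id] at h2
    exact h2.const_mul (kern n σ β y)
  have hmain := hasFDerivAt_integral_of_dominated_of_fderiv_le
    (F := fun x y : Rn n => kern n σ β y * f (x - y)) (F' := F') (x₀ := x₀)
    (bound := fun y : Rn n => K * (‖kern n σ β y‖ * (1 + ‖y‖) ^ (-N))) (Metric.ball_mem_nhds x₀ one_pos)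
    (Eventually.of_forall hFmeas) (integrable_kern_schwartz hn σ β hβ f x₀)
    hF'meas (ae_of_all _ hbound) hbound_int (ae_of_all _ hdiff)
  have hintF' : Integrable (F' x₀) volume := by
    refine hbound_int.mono' hF'meas (ae_of_all _ fun y => ?_)
    exact hbound y x₀ (Metric.mem_ball_self one_pos)
  have hD := hmain.const_mul (1 / Complex.Gamma β)
  have hfd : fderiv ℝ (parP n σ β (⇑f)) x₀
      = (1 / Complex.Gamma β) • ∫ y : Rn n, F' x₀ y := hD.fderiv
  show fderiv ℝ (parP n σ β (⇑f)) x₀ ((0, 1) : Rn n) = _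
  rw [hfd, ContinuousLinearMap.smul_apply, ContinuousLinearMap.integral_apply hintF',
    parP_eq, smul_eq_mul]
  congr 1

/-! ### Iteration -/

lemma dn_iter {n : ℕ} (k : ℕ) (f : SchwartzMap (Rn n) ℂ) :
    (dn n)^[k] (⇑f) = ⇑((LineDeriv.lineDerivOpCLM ℝ (SchwartzMap (Rn n) ℂ) ((0, 1) : Rn n))^[k] f) := by
  induction k with
  | zero => rfl
  | succ k ih =>
    rw [Function.iterate_succ_apply', Function.iterate_succ_apply', ih]
    funext z
    show fderiv ℝ (⇑((LineDeriv.lineDerivOpCLM ℝ (SchwartzMap (Rn n) ℂ) ((0, 1) : Rn n))^[k] f)) z ((0, 1) : Rn n) = _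
    exact (pderiv_apply_aux ((0, 1) : Rn n) _ z).symm

lemma E1aux {n : ℕ} (hn : 2 ≤ n) (σ : Bool) :
    ∀ (k : ℕ) (α : ℂ), 0 < α.re → ∀ (f : SchwartzMap (Rn n) ℂ) (x : Rn n),
      parP n σ α (⇑f) x
        = (if σ then 1 else -1 : ℂ) ^ k
          * parP n σ (α + k) (⇑((LineDeriv.lineDerivOpCLM ℝ (SchwartzMap (Rn n) ℂ) ((0, 1) : Rn n))^[k] f)) x := by
  intro k
  induction k with
  | zero => intro α hα f x; simp
  | succ k ih =>
    intro α hα f x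
    rw [step1 hn σ α hα f x,
      ih (α + 1) (re_add_one hα) (LineDeriv.lineDerivOpCLM ℝ (SchwartzMap (Rn n) ℂ) ((0, 1) : Rn n) f) x,
      ← Function.iterate_succ_apply]
    rw [show (α + 1 + (k : ℂ)) = α + ((k + 1 : ℕ) : ℂ) by push_cast; ring]
    ring

lemma E2aux {n : ℕ} (hn : 2 ≤ n) (σ : Bool) :
    ∀ (k : ℕ) (β : ℂ), 0 < β.re → ∀ (f : SchwartzMap (Rn n) ℂ) (x : Rn n),
      (dn n)^[k] (parP n σ β (⇑f)) x
        = parP n σ β (⇑((LineDeriv.lineDerivOpCLM ℝ (SchwartzMap (Rn n) ℂ) ((0, 1) : Rn n))^[k] f)) x := by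
  intro k
  induction k with
  | zero => intro β hβ f x; rfl
  | succ k ih =>
    intro β hβ f x
    rw [Function.iterate_succ_apply]
    have hstep : dn n (parP n σ β (⇑f))
        = parP n σ β (⇑(LineDeriv.lineDerivOpCLM ℝ (SchwartzMap (Rn n) ℂ) ((0, 1) : Rn n) f)) :=
      funext fun z => step2 hn σ β hβ f z
    rw [hstep, ih β hβ (LineDeriv.lineDerivOpCLM ℝ (SchwartzMap (Rn n) ℂ) ((0, 1) : Rn n) f) x,
      ← Function.iterate_succ_apply]



/-- (P_±^α f)(x) = (±1)^k (P_±^{α+k} ∂ₙ^k f)(x) = (±1)^k (∂ₙ^k P_±^{α+k} f)(x). -/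
theorem parP_shift_index (n : ℕ) (hn : 2 ≤ n) (σ : Bool)
    (α : ℂ) (hα : 0 < α.re) (k : ℕ) (hk : 0 < k)
    (f : SchwartzMap (Rn n) ℂ) (x : Rn n) :
    parP n σ α (fun y => f y) x
      = (if σ then (1 : ℂ) else -1) ^ k * parP n σ (α + k) ((dn n)^[k] (fun y => f y)) x ∧
    parP n σ α (fun y => f y) x
      = (if σ then (1 : ℂ) else -1) ^ k * (dn n)^[k] (parP n σ (α + k) (fun y => f y)) x := by
  have hαk : 0 < (α + (k : ℂ)).re := by
    simp only [Complex.add_re, Complex.natCast_re]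
    have : (0 : ℝ) ≤ (k : ℝ) := Nat.cast_nonneg k
    linarith
  have hbridge := dn_iter (n := n) k f
  have h1 := E1aux hn σ k α hα f x
  have h2 := E2aux hn σ k (α + k) hαk f x
  constructor
  · show parP n σ α (⇑f) x
      = (if σ then (1 : ℂ) else -1) ^ k * parP n σ (α + k) ((dn n)^[k] (⇑f)) x
    rw [hbridge]
    exact h1
  · show parP n σ α (⇑f) x
      = (if σ then (1 : ℂ) else -1) ^ k * (dn n)^[k] (parP n σ (α + k) (⇑f)) x
    rw [h2]
    exact h1

end
end

section
/- Let α ∈ ℂ with Re α > 0, let ε > 0, and let x ∈ ℝⁿ. Then the function y ↦ (y_n − |y'|²)_+^{α−1} e^{−ε y_n} e^{i x·y} is integrable on ℝⁿ and (1/Γ(α)) ∫_{ℝⁿ} (y_n − |y'|²)_+^{α−1} e^{−ε y_n} e^{i x·y} dy = π^{(n−1)/2} (ε − i x_n)^{−α−(n−1)/2} exp(−|x'|²/(4(ε − i x_n))), where for z ∈ ℂ with Re z > 0 and λ ∈ ℂ the power z^λ = exp(λ(log|z| + i·arg z)) is taken with −π/2 < arg z < π/2. -/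
open MeasureTheory Complex

noncomputable section

namespace ParAux

open Set


lemma integrableOn_cpow_exp {a b : ℂ} (ha : 0 < a.re) (hb : 0 < b.re) :
    IntegrableOn (fun t : ℝ => (t : ℂ) ^ (a - 1) * Complex.exp (-b * t)) (Set.Ioi 0) := by
  have hmeas : AEStronglyMeasurable (fun t : ℝ => (t : ℂ) ^ (a - 1) * Complex.exp (-b * t))
      (volume.restrict (Set.Ioi 0)) := by
    apply ContinuousOn.aestronglyMeasurable ?_ measurableSet_Ioi
    apply ContinuousOn.mul
    · apply ContinuousOn.cpow continuous_ofReal.continuousOn continuousOn_const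
      intro t ht
      exact Or.inl (by exact_mod_cast ht)
    · exact (Complex.continuous_exp.comp
        ((continuous_const.mul continuous_ofReal))).continuousOn
  refine Integrable.mono' (g := fun t : ℝ => t ^ (a.re - 1) * Real.exp (-b.re * t)) ?_ hmeas ?_
  · have := integrableOn_rpow_mul_exp_neg_mul_rpow (p := 1) (s := a.re - 1) (b := b.re)
      (by linarith) one_pos hb
    simp [Real.rpow_one] at this ⊢
    exact this
  · filter_upwards [ae_restrict_mem measurableSet_Ioi] with t ht
    rw [norm_mul,
      Complex.norm_cpow_eq_rpow_re_of_pos ht, Complex.norm_exp]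
    have : (-b * (t : ℂ)).re = -b.re * t := by simp [Complex.mul_re]
    rw [this]
    simp [Complex.sub_re]

lemma integral_cpow_exp {a b : ℂ} (ha : 0 < a.re) (hb : 0 < b.re) :
    ∫ t : ℝ in Set.Ioi 0, (t : ℂ) ^ (a - 1) * Complex.exp (-b * t)
      = Complex.Gamma a * b ^ (-a) := by
  set U : Set ℂ := {z : ℂ | 0 < z.re} with hU_def
  have hUopen : IsOpen U := isOpen_lt continuous_const Complex.continuous_re
  have hUconn : IsPreconnected U := (convex_halfSpace_re_gt 0).isPreconnected
  set f : ℂ → ℂ := fun z => ∫ t : ℝ in Set.Ioi 0, (t : ℂ) ^ (a - 1) * Complex.exp (-z * t)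
    with hf_def
  set g : ℂ → ℂ := fun z => Complex.Gamma a * z ^ (-a) with hg_def
  have hf : DifferentiableOn ℂ f U := by
    intro z₀ hz₀
    have hz₀re : 0 < z₀.re := hz₀
    have hmeas : ∀ z : ℂ, 0 < z.re → AEStronglyMeasurable
        (fun t : ℝ => (t : ℂ) ^ (a - 1) * Complex.exp (-z * t))
        (volume.restrict (Set.Ioi 0)) := fun z hz =>
      (integrableOn_cpow_exp ha hz).aestronglyMeasurable
    have hmeas' : AEStronglyMeasurable
        (fun t : ℝ => (t : ℂ) ^ (a - 1) * Complex.exp (-z₀ * t) * -(t : ℂ))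
        (volume.restrict (Set.Ioi 0)) :=
      (hmeas z₀ hz₀re).mul (Complex.continuous_ofReal.neg.aestronglyMeasurable.restrict)
    have key := hasDerivAt_integral_of_dominated_loc_of_deriv_le
      (F := fun z (t : ℝ) => (t : ℂ) ^ (a - 1) * Complex.exp (-z * t))
      (F' := fun z (t : ℝ) => (t : ℂ) ^ (a - 1) * Complex.exp (-z * t) * -(t : ℂ))
      (x₀ := z₀) (bound := fun t : ℝ => t ^ a.re * Real.exp (-(z₀.re / 2) * t))
      (μ := volume.restrict (Set.Ioi 0)) (s := Metric.ball z₀ (z₀.re / 2)) (Metric.ball_mem_nhds z₀ (by positivity))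
      ?_ (integrableOn_cpow_exp ha hz₀re) hmeas' ?_ ?_ ?_
    · exact key.2.differentiableAt.differentiableWithinAt
    · filter_upwards [Metric.ball_mem_nhds z₀ (half_pos hz₀re)] with z hz
      have : 0 < z.re := by
        have := Complex.abs_re_le_norm (z - z₀)
        rw [Complex.sub_re] at this
        have h2 : ‖z - z₀‖ < z₀.re / 2 := by
          rwa [Metric.mem_ball, Complex.dist_eq] at hz
        have := abs_sub_lt_iff.mp (lt_of_le_of_lt this h2)
        linarith [this.2]
      exact hmeas z this
    · filter_upwards [ae_restrict_mem measurableSet_Ioi] with t ht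
      intro z hz
      have hzre : z₀.re / 2 ≤ z.re := by
        have h1 := Complex.abs_re_le_norm (z - z₀)
        rw [Complex.sub_re] at h1
        have h2 : ‖z - z₀‖ < z₀.re / 2 := by
          rwa [Metric.mem_ball, Complex.dist_eq] at hz
        have := abs_sub_lt_iff.mp (lt_of_le_of_lt h1 h2)
        linarith [this.2]
      rw [norm_mul, norm_mul, norm_neg,
        Complex.norm_cpow_eq_rpow_re_of_pos ht, Complex.norm_exp,
        Complex.norm_real, Real.norm_eq_abs, abs_of_pos ht]
      rw [mul_assoc]
      have hre : (-z * (t : ℂ)).re = -z.re * t := by simp [Complex.mul_re]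
      rw [hre, Complex.sub_re, Complex.one_re]
      calc t ^ (a.re - 1) * (Real.exp (-z.re * t) * t)
          = t ^ (a.re - 1) * t * Real.exp (-z.re * t) := by ring
        _ = t ^ a.re * Real.exp (-z.re * t) := by
            rw [← Real.rpow_add_one ht.ne' (a.re - 1)]; ring_nf
        _ ≤ t ^ a.re * Real.exp (-(z₀.re / 2) * t) := by
            have h3 : Real.exp (-z.re * t) ≤ Real.exp (-(z₀.re / 2) * t) :=
              Real.exp_le_exp.mpr (by nlinarith [mul_le_mul_of_nonneg_right hzre (le_of_lt (Set.mem_Ioi.mp ht))])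
            have h4 : (0:ℝ) ≤ t ^ a.re := Real.rpow_nonneg ht.le _
            exact mul_le_mul_of_nonneg_left h3 h4
    · have : IntegrableOn (fun t : ℝ => t ^ a.re * Real.exp (-(z₀.re / 2) * t)) (Set.Ioi 0) := by
        have := integrableOn_rpow_mul_exp_neg_mul_rpow (p := 1) (s := a.re) (b := z₀.re / 2)
          (by linarith) one_pos (by positivity)
        simpa [Real.rpow_one] using this
      exact this
    · filter_upwards [ae_restrict_mem measurableSet_Ioi] with t ht
      intro z hz
      have hexp : HasDerivAt (fun w : ℂ => Complex.exp (-w * t))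
          (Complex.exp (-z * t) * -(t : ℂ)) z := by
        have h1 : HasDerivAt (fun w : ℂ => -w * (t : ℂ)) (-(t : ℂ)) z := by
          simpa using ((hasDerivAt_id z).neg.mul_const (t : ℂ))
        simpa using h1.cexp
      convert hexp.const_mul ((t : ℂ) ^ (a - 1)) using 1
      · rfl
      ring
  have hg : DifferentiableOn ℂ g U := by
    intro z hz
    have : DifferentiableAt ℂ (fun z : ℂ => z ^ (-a)) z := by
      have := (hasDerivAt_id z).cpow_const (c := -a) (Or.inl hz)
      exact this.differentiableAt
    exact ((this.const_mul _).differentiableWithinAt)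
  have heq : EqOn f g U := by
    apply AnalyticOnNhd.eqOn_of_preconnected_of_frequently_eq
      (hf.analyticOnNhd hUopen) (hg.analyticOnNhd hUopen) hUconn
      (z₀ := 1) (by simp [hU_def])
    -- frequently equal near 1
    have hval : ∀ r : ℝ, 0 < r → f r = g r := by
      intro r hr
      have h1 := integral_cpow_mul_exp_neg_mul_Ioi ha hr
      have h2 : (fun t : ℝ => (t : ℂ) ^ (a - 1) * Complex.exp (-(r : ℂ) * t))
          = fun t : ℝ => (t : ℂ) ^ (a - 1) * Complex.exp (-((r : ℂ) * t)) := by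
        funext t; rw [neg_mul]
      rw [hf_def]
      simp only
      rw [h2, h1, hg_def]
      have hrarg : (r : ℂ).arg ≠ Real.pi := by
        rw [Complex.arg_ofReal_of_nonneg hr.le]
        exact Real.pi_ne_zero.symm
      rw [one_div, Complex.inv_cpow _ _ hrarg, ← Complex.cpow_neg, mul_comm]
    have hseq : Filter.Tendsto (fun k : ℕ => ((1 + ((k : ℝ) + 1)⁻¹ : ℝ) : ℂ)) Filter.atTop
        (nhdsWithin 1 {(1 : ℂ)}ᶜ) := by
      apply tendsto_nhdsWithin_of_tendsto_nhds_of_eventually_within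
      · have : Filter.Tendsto (fun k : ℕ => (1 + ((k : ℝ) + 1)⁻¹ : ℝ)) Filter.atTop (nhds 1) := by
          have := tendsto_one_div_add_atTop_nhds_zero_nat (𝕜 := ℝ)
          simp only [one_div] at this
          simpa using Filter.Tendsto.const_add 1 this
        have := (Complex.continuous_ofReal.tendsto 1).comp this
        simpa [Function.comp_def] using this
      · filter_upwards with k
        simp only [Set.mem_compl_iff, Set.mem_singleton_iff]
        intro h
        have : (1 + ((k : ℝ) + 1)⁻¹ : ℝ) = 1 := by exact_mod_cast h
        have hpos : (0 : ℝ) < ((k : ℝ) + 1)⁻¹ := by positivity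
        linarith
    exact hseq.frequently (Filter.Frequently.of_forall fun k =>
      hval _ (by positivity))
  have hb' : b ∈ U := hb
  exact heq hb'

lemma ofReal_div_cpow {r : ℝ} (hr : 0 < r) {z : ℂ} (hz : 0 < z.re) (w : ℂ) :
    ((r : ℂ) / z) ^ w = (r : ℂ) ^ w * z ^ (-w) := by
  have hz0 : z ≠ 0 := by intro h; rw [h] at hz; simp at hz
  have hzarg : z.arg ≠ Real.pi := Complex.slitPlane_arg_ne_pi (Or.inl hz)
  have hr0 : (r : ℂ) ≠ 0 := Complex.ofReal_ne_zero.mpr hr.ne'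
  rw [div_eq_mul_inv, Complex.cpow_def_of_ne_zero (mul_ne_zero hr0 (inv_ne_zero hz0)),
    Complex.log_ofReal_mul hr (inv_ne_zero hz0), Complex.log_inv _ hzarg,
    Complex.cpow_def_of_ne_zero hr0, Complex.cpow_def_of_ne_zero hz0, ← Complex.exp_add]
  rw [Complex.ofReal_log hr.le]
  congr 1
  ring

end ParAux

/-- Fourier computation for the "+" kernel with exponential damping:
(1/Γ(α)) ∫ (yₙ−|y'|²)₊^{α−1} e^{−ε yₙ} e^{i x·y} dy
  = π^{(n−1)/2} (ε − i xₙ)^{−α−(n−1)/2} exp(−|x'|²/(4(ε − i xₙ))),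
with the principal power branch (arg ∈ (−π/2, π/2) since Re(ε − i xₙ) = ε > 0). -/
theorem fourier_plus_kernel_damped (n : ℕ) (hn : 2 ≤ n)
    (α : ℂ) (hα : 0 < α.re) (ε : ℝ) (hε : 0 < ε) (x : Rn n) :
    Integrable (fun y : Rn n => ppow true (y.2 - ‖y.1‖ ^ 2) (α - 1) *
      Complex.exp (-(ε : ℂ) * y.2) *
      Complex.exp (Complex.I * (((inner ℝ x.1 y.1 : ℝ) : ℂ) + (x.2 : ℂ) * y.2))) ∧
    (1 / Complex.Gamma α) *
        ∫ y : Rn n, ppow true (y.2 - ‖y.1‖ ^ 2) (α - 1) *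
          Complex.exp (-(ε : ℂ) * y.2) *
          Complex.exp (Complex.I * (((inner ℝ x.1 y.1 : ℝ) : ℂ) + (x.2 : ℂ) * y.2))
      = (Real.pi : ℂ) ^ (((n : ℂ) - 1) / 2) *
          ((ε : ℂ) - Complex.I * x.2) ^ (-α - ((n : ℂ) - 1) / 2) *
          Complex.exp (-((‖x.1‖ ^ 2 : ℝ) : ℂ) / (4 * ((ε : ℂ) - Complex.I * x.2))) := by
  have h1n : 1 ≤ n := le_trans one_le_two hn
  set b : ℂ := (ε : ℂ) - Complex.I * x.2 with hb_def
  have hbre : b.re = ε := by simp [hb_def]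
  have hb : 0 < b.re := by rw [hbre]; exact hε
  have hbne : b ≠ 0 := by intro h; rw [h] at hb; simp at hb
  set F : Rn n → ℂ := fun y => ppow true (y.2 - ‖y.1‖ ^ 2) (α - 1) *
      Complex.exp (-(ε : ℂ) * y.2) *
      Complex.exp (Complex.I * (((inner ℝ x.1 y.1 : ℝ) : ℂ) + (x.2 : ℂ) * y.2)) with hF_def
  set G : EuclideanSpace ℝ (Fin (n - 1)) → ℂ := fun v =>
      Complex.exp (-b * (‖v‖ : ℂ) ^ 2 + Complex.I * ((inner ℝ x.1 v : ℝ) : ℂ)) with hG_def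
  set H : ℝ → ℂ := fun t => ppow true t (α - 1) * Complex.exp (-b * t) with hH_def
  set T : Rn n → Rn n := fun p => (p.1, p.2 + ‖p.1‖ ^ 2) with hT_def
  -- T is measure preserving
  have hT : MeasurePreserving T volume volume := by
    rw [show (volume : Measure (Rn n))
        = (volume : Measure (EuclideanSpace ℝ (Fin (n - 1)))).prod volume from
      Measure.volume_eq_prod _ _]
    exact (MeasurePreserving.id volume).skew_product
      (measurable_snd.add ((measurable_fst.norm).pow_const 2))
      (Filter.Eventually.of_forall fun v =>
        (measurePreserving_add_right volume (‖v‖ ^ 2)).map_eq)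
  have hTemb : MeasurableEmbedding T := by
    refine Homeomorph.measurableEmbedding
      { toFun := T
        invFun := fun p => (p.1, p.2 - ‖p.1‖ ^ 2)
        left_inv := fun p => by simp [hT_def]
        right_inv := fun p => by simp [hT_def]
        continuous_toFun :=
          continuous_fst.prodMk (continuous_snd.add ((continuous_fst.norm).pow 2))
        continuous_invFun :=
          continuous_fst.prodMk (continuous_snd.sub ((continuous_fst.norm).pow 2)) }
  -- pointwise identity after the shear
  have hkey : ∀ p : Rn n, F (T p) = G p.1 * H p.2 := by
    intro p
    simp only [hF_def, hT_def, hG_def, hH_def]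
    have h1 : p.2 + ‖p.1‖ ^ 2 - ‖p.1‖ ^ 2 = p.2 := by ring
    rw [h1]
    rw [mul_assoc, ← Complex.exp_add]
    conv_rhs => rw [mul_left_comm, ← Complex.exp_add]
    congr 1
    rw [hb_def]
    push_cast
    ring
  -- measurability of F
  have hFmeas : AEStronglyMeasurable F volume := by
    apply Measurable.aestronglyMeasurable
    apply Measurable.mul
    apply Measurable.mul
    · have hm : Measurable (fun s : ℝ => ppow true s (α - 1)) := by
        simp only [ppow, if_true]
        exact Measurable.ite measurableSet_Ioi
          (Complex.measurable_exp.comp (measurable_const.mul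
            (Complex.measurable_ofReal.comp Real.measurable_log))) measurable_const
      exact hm.comp (measurable_snd.sub (measurable_fst.norm.pow_const 2))
    · exact (Complex.continuous_exp.comp (continuous_const.mul
        (Complex.continuous_ofReal.comp continuous_snd))).measurable
    · apply Continuous.measurable
      apply Complex.continuous_exp.comp
      apply continuous_const.mul
      apply Continuous.add
      · exact Complex.continuous_ofReal.comp (continuous_const.inner continuous_fst)
      · exact continuous_const.mul (Complex.continuous_ofReal.comp continuous_snd)
  have hcomp : F ∘ T = fun p : Rn n => G p.1 * H p.2 := funext fun p => hkey p
  -- integrability and value of H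
  have hH_eq : H = Set.indicator (Set.Ioi 0)
      (fun t : ℝ => (t : ℂ) ^ (α - 1) * Complex.exp (-b * t)) := by
    funext t
    simp only [hH_def]
    by_cases h : t ∈ Set.Ioi 0
    · rw [Set.indicator_of_mem h]
      have ht : (0 : ℝ) < t := h
      congr 1
      simp only [ppow, if_true, if_pos ht]
      rw [Complex.cpow_def_of_ne_zero (by exact_mod_cast ht.ne' : (t : ℂ) ≠ 0),
        ← Complex.ofReal_log ht.le, mul_comm]
    · rw [Set.indicator_of_notMem h]
      have ht : ¬ (0 : ℝ) < t := h
      simp only [ppow, if_true, if_neg ht, zero_mul]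
  have hHint : Integrable H := by
    rw [hH_eq, integrable_indicator_iff measurableSet_Ioi]
    exact ParAux.integrableOn_cpow_exp hα hb
  have hHval : ∫ t : ℝ, H t = Complex.Gamma α * b ^ (-α) := by
    rw [hH_eq, integral_indicator measurableSet_Ioi]
    exact ParAux.integral_cpow_exp hα hb
  -- integrability and value of G
  have hGint : Integrable G :=
    GaussianFourier.integrable_cexp_neg_mul_sq_norm_add hb Complex.I x.1
  have hGval : ∫ v, G v = ((Real.pi : ℂ) / b) ^ (((n : ℂ) - 1) / 2) *
      Complex.exp (-((‖x.1‖ ^ 2 : ℝ) : ℂ) / (4 * b)) := by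
    rw [hG_def]
    rw [GaussianFourier.integral_cexp_neg_mul_sq_norm_add hb Complex.I x.1]
    congr 1
    · congr 1
      rw [finrank_euclideanSpace_fin]
      rw [Nat.cast_sub h1n]
      norm_num
    · congr 1
      rw [Complex.I_sq]
      push_cast
      ring
  constructor
  · rw [← hT.integrable_comp hFmeas, hcomp,
      show (volume : Measure (Rn n))
        = (volume : Measure (EuclideanSpace ℝ (Fin (n - 1)))).prod volume from
      Measure.volume_eq_prod _ _]
    exact hGint.mul_prod hHint
  · have h2 : ∫ y : Rn n, F y = (∫ v, G v) * ∫ t, H t := by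
      rw [← hT.integral_comp hTemb F]
      have : (fun p : Rn n => F (T p)) = fun p : Rn n => G p.1 * H p.2 := funext hkey
      rw [this, show (volume : Measure (Rn n))
          = (volume : Measure (EuclideanSpace ℝ (Fin (n - 1)))).prod volume from
        Measure.volume_eq_prod _ _]
      exact integral_prod_mul G H
    rw [h2, hGval, hHval]
    rw [ParAux.ofReal_div_cpow Real.pi_pos hb]
    have hΓ : Complex.Gamma α ≠ 0 := Complex.Gamma_ne_zero_of_re_pos hα
    have hbpow : b ^ (-α - ((n : ℂ) - 1) / 2)
        = b ^ (-α) * b ^ (-(((n : ℂ) - 1) / 2)) := by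
      rw [← Complex.cpow_add _ _ hbne]
      ring_nf
    rw [hbpow]
    field_simp
end
end

section
/- Let α ∈ ℂ with Re α > 0, let ε > 0, and let x ∈ ℝⁿ. Then the function y ↦ (y_n − |y'|²)_−^{α−1} e^{ε y_n − 2ε|y'|²} e^{i x·y} is integrable on ℝⁿ and (1/Γ(α)) ∫_{ℝⁿ} (y_n − |y'|²)_−^{α−1} e^{ε y_n − 2ε|y'|²} e^{i x·y} dy = π^{(n−1)/2} (ε + i x_n)^{−α} (ε − i x_n)^{(1−n)/2} exp(−|x'|²/(4(ε − i x_n))), where for z ∈ ℂ with Re z > 0 and λ ∈ ℂ the power z^λ = exp(λ(log|z| + i·arg z)) is taken with −π/2 < arg z < π/2. -/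
open MeasureTheory Complex Set Filter Topology Metric

noncomputable section

lemma cpow_cexp_contOn {a b : ℂ} :
    ContinuousOn (fun t : ℝ => (t : ℂ) ^ (a - 1) * Complex.exp (-(b * t))) (Ioi 0) := by
  apply ContinuousOn.mul
  · apply continuousOn_of_forall_continuousAt
    intro x hx
    exact (continuousAt_cpow_const <| ofReal_mem_slitPlane.2 hx).comp
      continuous_ofReal.continuousAt
  · exact (Complex.continuous_exp.comp (by continuity)).continuousOn

lemma integrable_cpow_mul_cexp {a b : ℂ} (ha : 0 < a.re) (hb : 0 < b.re) :
    IntegrableOn (fun t : ℝ => (t : ℂ) ^ (a - 1) * Complex.exp (-(b * t))) (Ioi 0) := by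
  have hbound : IntegrableOn (fun t : ℝ => t ^ (a.re - 1) * Real.exp (-b.re * t)) (Ioi 0) := by
    have := integrableOn_rpow_mul_exp_neg_mul_rpow (s := a.re - 1) (p := 1)
      (by linarith) zero_lt_one hb
    simpa [Real.rpow_natCast, Real.rpow_one] using this
  refine hbound.mono' (cpow_cexp_contOn.aestronglyMeasurable measurableSet_Ioi) ?_
  filter_upwards [self_mem_ae_restrict measurableSet_Ioi] with t ht
  rw [mem_Ioi] at ht
  rw [norm_mul, Complex.norm_cpow_eq_rpow_re_of_pos ht, Complex.norm_exp]
  simp [Complex.sub_re, mul_comm]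

open Filter Topology Metric in
lemma integral_cpow_mul_cexp {a : ℂ} (ha : 0 < a.re) {b : ℂ} (hb : 0 < b.re) :
    ∫ t : ℝ in Ioi 0, (t : ℂ) ^ (a - 1) * Complex.exp (-(b * t))
      = Complex.Gamma a * b ^ (-a) := by
  set U : Set ℂ := {z | 0 < z.re} with hU
  have hUopen : IsOpen U := isOpen_lt continuous_const Complex.continuous_re
  have hUconn : IsPreconnected U := (convex_halfSpace_re_gt 0).isPreconnected
  set F : ℂ → ℂ := fun b => ∫ t : ℝ in Ioi 0, (t : ℂ) ^ (a - 1) * Complex.exp (-(b * t)) with hF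
  set G : ℂ → ℂ := fun b => Complex.Gamma a * b ^ (-a) with hG
  have hFdiff : DifferentiableOn ℂ F U := by
    intro c hc
    have hcre : 0 < c.re := hc
    have hε : 0 < c.re / 2 := by linarith
    have key := hasDerivAt_integral_of_dominated_loc_of_deriv_le (μ := volume.restrict (Ioi 0))
      (F := fun x (t : ℝ) => (t : ℂ) ^ (a - 1) * Complex.exp (-(x * t)))
      (F' := fun x (t : ℝ) => (t : ℂ) ^ (a - 1) * (Complex.exp (-(x * t)) * -(t : ℂ)))
      (x₀ := c) (bound := fun t : ℝ => t ^ a.re * Real.exp (-(c.re / 2) * t)) (ball_mem_nhds c hε)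
      ?_ ?_ ?_ ?_ ?_ ?_
    · exact (key.2.differentiableAt).differentiableWithinAt
    · exact Eventually.of_forall fun x =>
        (cpow_cexp_contOn (a := a) (b := x)).aestronglyMeasurable measurableSet_Ioi
    · exact integrable_cpow_mul_cexp ha hcre
    · apply ContinuousOn.aestronglyMeasurable ?_ measurableSet_Ioi
      have := (cpow_cexp_contOn (a := a) (b := c)).mul
        ((Complex.continuous_ofReal.neg).continuousOn)
      convert this using 1
      funext t
      simp only [Pi.mul_apply, Pi.neg_apply]
      ring
    · filter_upwards [self_mem_ae_restrict measurableSet_Ioi] with t ht x hx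
      rw [mem_Ioi] at ht
      have hxre : c.re / 2 ≤ x.re := by
        have := Complex.abs_re_le_norm (x - c)
        have hd : ‖x - c‖ < c.re / 2 := by
          rw [← Complex.dist_eq]; exact mem_ball.mp hx
        have : |x.re - c.re| < c.re / 2 := by
          simpa [Complex.sub_re] using lt_of_le_of_lt this hd
        have := abs_lt.mp this
        linarith [this.1]
      rw [norm_mul, norm_mul, norm_neg, Complex.norm_cpow_eq_rpow_re_of_pos ht, Complex.norm_exp,
        Complex.norm_of_nonneg ht.le]
      have h1 : t ^ (a - 1).re * (Real.exp ((-(x * t)).re) * t)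
          = t ^ a.re * Real.exp (-x.re * t) := by
        rw [Complex.sub_re, Complex.one_re]
        rw [show t ^ (a.re - 1) * (Real.exp ((-(x * t)).re) * t)
            = t ^ (a.re - 1) * t * Real.exp ((-(x * t)).re) by ring]
        rw [← Real.rpow_add_one ht.ne' (a.re - 1), sub_add_cancel]
        congr 1
        simp [Complex.neg_re, Complex.mul_re]
      rw [h1]
      exact mul_le_mul_of_nonneg_left (Real.exp_le_exp.mpr (by nlinarith))
        (Real.rpow_nonneg ht.le _)
    · have := integrableOn_rpow_mul_exp_neg_mul_rpow (s := a.re) (p := 1)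
        (by linarith) zero_lt_one hε
      simpa [Real.rpow_one, IntegrableOn] using this
    · filter_upwards [self_mem_ae_restrict measurableSet_Ioi] with t ht x _
      have h1 : HasDerivAt (fun x : ℂ => -(x * (t : ℂ))) (-(t : ℂ)) x :=
        (hasDerivAt_mul_const (t : ℂ)).neg
      exact (h1.cexp).const_mul _
  have hGdiff : DifferentiableOn ℂ G U := by
    intro c hc
    have h1 : HasDerivAt (fun z : ℂ => z ^ (-a)) (-(a * c ^ (-a - 1))) c := by
      simpa using (hasDerivAt_id c).cpow_const (c := -a) (Or.inl hc)
    exact ((h1.differentiableAt.const_mul _)).differentiableWithinAt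
  have heq : EqOn F G U := by
    apply (hFdiff.analyticOnNhd hUopen).eqOn_of_preconnected_of_frequently_eq
      (hGdiff.analyticOnNhd hUopen) hUconn (show (1 : ℂ) ∈ U by simp [hU])
    have htend : Tendsto (fun k : ℕ => ((1 + ((k : ℝ) + 1)⁻¹ : ℝ) : ℂ)) atTop (𝓝[≠] (1 : ℂ)) := by
      apply tendsto_nhdsWithin_of_tendsto_nhds_of_eventually_within
      · have h0 : Tendsto (fun k : ℕ => ((k : ℝ) + 1)⁻¹) atTop (𝓝 0) :=
          tendsto_inv_atTop_zero.comp
            (tendsto_atTop_add_const_right _ 1 tendsto_natCast_atTop_atTop)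
        have : Tendsto (fun k : ℕ => (1 + ((k : ℝ) + 1)⁻¹ : ℝ)) atTop (𝓝 1) := by
          simpa using tendsto_const_nhds.add h0
        have := (Complex.continuous_ofReal.tendsto 1).comp this
        simpa [Function.comp_def] using this
      · apply Eventually.of_forall
        intro k
        simp only [mem_compl_iff, mem_singleton_iff]
        intro hcontra
        have : (1 + ((k : ℝ) + 1)⁻¹ : ℝ) = 1 := by exact_mod_cast hcontra
        have hpos : 0 < ((k : ℝ) + 1)⁻¹ := by positivity
        linarith
    apply htend.frequently
    apply Eventually.frequently
    apply Eventually.of_forall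
    intro k
    set r : ℝ := 1 + ((k : ℝ) + 1)⁻¹ with hr
    have hrpos : 0 < r := by positivity
    have := Complex.integral_cpow_mul_exp_neg_mul_Ioi ha hrpos
    have harg : Complex.arg (r : ℂ) ≠ Real.pi := by
      rw [Complex.arg_ofReal_of_nonneg hrpos.le]; exact Real.pi_ne_zero.symm
    rw [hF, hG]
    simp only
    rw [this, one_div, inv_cpow _ _ harg, ← cpow_neg, mul_comm]
  exact heq hb

lemma ofReal_div_cpow {r : ℝ} (hr : 0 < r) {z : ℂ} (hz : 0 < z.re) (w : ℂ) :
    ((r : ℂ) / z) ^ w = (r : ℂ) ^ w * z ^ (-w) := by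
  have hz0 : z ≠ 0 := fun h => by simp [h] at hz
  have harg : z.arg ≠ Real.pi := by
    intro h
    rw [Complex.arg_eq_pi_iff] at h
    linarith [h.1]
  have hr0 : (r : ℂ) ≠ 0 := Complex.ofReal_ne_zero.mpr hr.ne'
  rw [div_eq_mul_inv, Complex.cpow_def_of_ne_zero (mul_ne_zero hr0 (inv_ne_zero hz0)),
    Complex.log_ofReal_mul hr (inv_ne_zero hz0), add_mul, Complex.exp_add,
    Complex.cpow_neg, ← Complex.inv_cpow _ _ harg,
    Complex.cpow_def_of_ne_zero (inv_ne_zero hz0),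
    Complex.cpow_def_of_ne_zero hr0, ← Complex.ofReal_log hr.le]

open Set Filter Topology in
/-- Fourier computation for the "−" kernel with Gaussian damping:
(1/Γ(α)) ∫ (yₙ−|y'|²)₋^{α−1} e^{ε yₙ − 2ε|y'|²} e^{i x·y} dy
  = π^{(n−1)/2} (ε + i xₙ)^{−α} (ε − i xₙ)^{(1−n)/2} exp(−|x'|²/(4(ε − i xₙ))),
with the principal power branches (arg ∈ (−π/2, π/2) since the bases have Re = ε > 0). -/
theorem fourier_minus_kernel_damped (n : ℕ) (hn : 2 ≤ n)
    (α : ℂ) (hα : 0 < α.re) (ε : ℝ) (hε : 0 < ε) (x : Rn n) :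
    Integrable (fun y : Rn n => ppow false (y.2 - ‖y.1‖ ^ 2) (α - 1) *
      Complex.exp ((ε : ℂ) * y.2 - 2 * (ε : ℂ) * ((‖y.1‖ ^ 2 : ℝ) : ℂ)) *
      Complex.exp (Complex.I * (((inner ℝ x.1 y.1 : ℝ) : ℂ) + (x.2 : ℂ) * y.2))) ∧
    (1 / Complex.Gamma α) *
        ∫ y : Rn n, ppow false (y.2 - ‖y.1‖ ^ 2) (α - 1) *
          Complex.exp ((ε : ℂ) * y.2 - 2 * (ε : ℂ) * ((‖y.1‖ ^ 2 : ℝ) : ℂ)) *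
          Complex.exp (Complex.I * (((inner ℝ x.1 y.1 : ℝ) : ℂ) + (x.2 : ℂ) * y.2))
      = (Real.pi : ℂ) ^ (((n : ℂ) - 1) / 2) *
          ((ε : ℂ) + Complex.I * x.2) ^ (-α) *
          ((ε : ℂ) - Complex.I * x.2) ^ ((1 - (n : ℂ)) / 2) *
          Complex.exp (-((‖x.1‖ ^ 2 : ℝ) : ℂ) / (4 * ((ε : ℂ) - Complex.I * x.2))) := by
  classical
  set β : ℂ := (ε : ℂ) + Complex.I * x.2 with hβdef
  set b : ℂ := (ε : ℂ) - Complex.I * x.2 with hbdef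
  have hβ : 0 < β.re := by
    simp [hβdef, Complex.add_re, Complex.mul_re, hε]
  have hb : 0 < b.re := by
    simp [hbdef, Complex.sub_re, Complex.mul_re, hε]
  set h : Rn n → ℂ := fun y => ppow false (y.2 - ‖y.1‖ ^ 2) (α - 1) *
      Complex.exp ((ε : ℂ) * y.2 - 2 * (ε : ℂ) * ((‖y.1‖ ^ 2 : ℝ) : ℂ)) *
      Complex.exp (Complex.I * (((inner ℝ x.1 y.1 : ℝ) : ℂ) + (x.2 : ℂ) * y.2)) with hh
  set G₁ : EuclideanSpace ℝ (Fin (n - 1)) → ℂ := fun v =>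
    Complex.exp (-b * (‖v‖ : ℂ) ^ 2 + Complex.I * ((inner ℝ x.1 v : ℝ) : ℂ)) with hG₁
  set G₂ : ℝ → ℂ := fun s => ppow false s (α - 1) * Complex.exp (β * s) with hG₂
  -- G₂ facts
  have hG₂neg : ∀ u : ℝ, u ∈ Ioi (0 : ℝ) →
      G₂ (-u) = (u : ℂ) ^ (α - 1) * Complex.exp (-(β * u)) := by
    intro u hu
    rw [mem_Ioi] at hu
    have h1 : ppow false (-u) (α - 1) = Complex.exp ((α - 1) * Real.log u) := by
      simp [ppow, hu, neg_neg]
    have h2 : (u : ℂ) ^ (α - 1) = Complex.exp ((α - 1) * Real.log u) := by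
      rw [Complex.cpow_def_of_ne_zero (Complex.ofReal_ne_zero.mpr hu.ne'),
        ← Complex.ofReal_log hu.le, mul_comm]
    simp only [hG₂]
    rw [h1, h2]
    push_cast
    ring_nf
  have hG₂Iio : IntegrableOn G₂ (Iio 0) := by
    have hne : MeasurableEmbedding (fun t : ℝ => -t) :=
      (Homeomorph.neg ℝ).measurableEmbedding
    have hmap : volume.restrict (Iio (0 : ℝ))
        = Measure.map (fun t : ℝ => -t) (volume.restrict (Ioi 0)) := by
      rw [show (Ioi (0 : ℝ)) = (fun t : ℝ => -t) ⁻¹' (Iio 0) by ext t; simp,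
        ← Measure.restrict_map (measurable_neg) measurableSet_Iio,
        Measure.map_neg_eq_self]
    have h1 : IntegrableOn (G₂ ∘ fun t : ℝ => -t) (Ioi 0) :=
      (integrable_cpow_mul_cexp hα hβ).congr_fun
        (fun u hu => (hG₂neg u hu).symm) measurableSet_Ioi
    rw [IntegrableOn, hmap, hne.integrable_map_iff]
    exact h1
  have hG₂int : Integrable G₂ := by
    have hIci : IntegrableOn G₂ (Ici 0) := by
      have : EqOn G₂ (fun _ => (0 : ℂ)) (Ici 0) := by
        intro s hs
        rw [mem_Ici] at hs
        simp [hG₂, ppow, not_lt.mpr hs]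
      exact (integrableOn_congr_fun this measurableSet_Ici).mpr ((integrableOn_const_iff (C := (0 : ℂ))).mpr (Or.inl (by simp)))
    rw [← integrableOn_univ, ← Iio_union_Ici (a := (0 : ℝ)), integrableOn_union]
    exact ⟨hG₂Iio, hIci⟩
  have hG₂val : ∫ s : ℝ, G₂ s = Complex.Gamma α * β ^ (-α) := by
    rw [← setIntegral_eq_integral_of_forall_compl_eq_zero (s := Iic (0 : ℝ))
      (fun s hs => by simp [hG₂, ppow, not_lt.mpr (le_of_lt (by simpa using hs))]),
      show (Iic (0 : ℝ)) = Iic (-0) by norm_num, ← integral_comp_neg_Ioi,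
      setIntegral_congr_fun measurableSet_Ioi hG₂neg]
    exact integral_cpow_mul_cexp hα hβ
  -- G₁ facts
  have hG₁int : Integrable G₁ :=
    GaussianFourier.integrable_cexp_neg_mul_sq_norm_add hb Complex.I x.1
  have hG₁val : ∫ v : EuclideanSpace ℝ (Fin (n - 1)), G₁ v = ((Real.pi : ℂ) / b) ^ (((n : ℂ) - 1) / 2) *
      Complex.exp (-((‖x.1‖ ^ 2 : ℝ) : ℂ) / (4 * b)) := by
    have h0 := GaussianFourier.integral_cexp_neg_mul_sq_norm_add
      (V := EuclideanSpace ℝ (Fin (n - 1))) hb Complex.I x.1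
    rw [hG₁, h0, finrank_euclideanSpace_fin]
    have hrank : ((n - 1 : ℕ) : ℂ) = (n : ℂ) - 1 := by
      have h1 : (1 : ℕ) ≤ n := by omega
      push_cast [Nat.cast_sub h1]
      ring
    rw [hrank]
    congr 1
    rw [Complex.I_sq]
    push_cast
    ring_nf
  -- the shear map
  set T : Rn n → Rn n := fun p => (p.1, p.2 + ‖p.1‖ ^ 2) with hT
  let hThomeo : Rn n ≃ₜ Rn n :=
    { toFun := T
      invFun := fun p => (p.1, p.2 - ‖p.1‖ ^ 2)
      left_inv := fun p => by simp [hT]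
      right_inv := fun p => by simp [hT]
      continuous_toFun := by
        apply Continuous.prodMk continuous_fst
        exact continuous_snd.add ((continuous_fst.norm).pow 2)
      continuous_invFun := by
        apply Continuous.prodMk continuous_fst
        exact continuous_snd.sub ((continuous_fst.norm).pow 2) }
  have hTemb : MeasurableEmbedding T := hThomeo.measurableEmbedding
  have hTmp : MeasurePreserving T volume volume := by
    rw [Measure.volume_eq_prod]
    exact (MeasurePreserving.id volume).skew_product
      (g := fun (v : EuclideanSpace ℝ (Fin (n - 1))) (s : ℝ) => s + ‖v‖ ^ 2)
      (measurable_snd.add ((measurable_fst.norm).pow measurable_const))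
      (ae_of_all _ fun v => (measurePreserving_add_right volume (‖v‖ ^ 2)).map_eq)
  -- pointwise identity
  have hcomp : ∀ p : Rn n, h (T p) = G₁ p.1 * G₂ p.2 := by
    rintro ⟨v, s⟩
    have harg : s + ‖v‖ ^ 2 - ‖v‖ ^ 2 = s := by ring
    simp only [hh, hT, hG₁, hG₂]
    rw [harg, mul_assoc, ← Complex.exp_add]
    conv_rhs => rw [mul_comm, mul_assoc, ← Complex.exp_add]
    congr 2
    rw [hbdef, hβdef]
    push_cast
    ring
  -- product integrability
  have hprod : Integrable (fun p : Rn n => G₁ p.1 * G₂ p.2) := by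
    have := hG₁int.mul_prod hG₂int
    rwa [← Measure.volume_eq_prod] at this
  have hint : Integrable h := by
    rw [← hTmp.integrable_comp_emb hTemb]
    exact hprod.congr (ae_of_all _ fun p => (hcomp p).symm)
  refine ⟨hint, ?_⟩
  have hIval : ∫ y : Rn n, h y = (∫ v : EuclideanSpace ℝ (Fin (n - 1)), G₁ v) * ∫ s : ℝ, G₂ s := by
    rw [← hTmp.integral_comp hTemb h]
    calc ∫ p : Rn n, h (T p) = ∫ p : Rn n, G₁ p.1 * G₂ p.2 := by
          exact integral_congr_ae (ae_of_all _ hcomp)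
      _ = (∫ v : EuclideanSpace ℝ (Fin (n - 1)), G₁ v) * ∫ s : ℝ, G₂ s := by
          rw [Measure.volume_eq_prod]
          exact integral_prod_mul G₁ G₂
  rw [show (∫ y : Rn n, ppow false (y.2 - ‖y.1‖ ^ 2) (α - 1) *
      Complex.exp ((ε : ℂ) * y.2 - 2 * (ε : ℂ) * ((‖y.1‖ ^ 2 : ℝ) : ℂ)) *
      Complex.exp (Complex.I * (((inner ℝ x.1 y.1 : ℝ) : ℂ) + (x.2 : ℂ) * y.2))) = ∫ y : Rn n, h y
      from rfl, hIval, hG₁val, hG₂val]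
  rw [ofReal_div_cpow Real.pi_pos hb (((n : ℂ) - 1) / 2)]
  have hΓ : Complex.Gamma α ≠ 0 := Complex.Gamma_ne_zero_of_re_pos hα
  have hexp2 : -(((n : ℂ) - 1) / 2) = (1 - (n : ℂ)) / 2 := by ring
  rw [hexp2]
  field_simp
end
end

section
/- Let α ∈ ℂ with Re α > 0 and let f be a Schwartz function on ℝⁿ. Then for each choice of sign ± and every x ∈ ℝⁿ, (P_±^α f)(x) = (T_±^α (B₁ f))(2x', x_n − |x'|²); that is, P_±^α f = B₂ T_±^α B₁ f, where (B₂ F)(x) = F(2x', x_n − |x'|²). -/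
open MeasureTheory Complex

noncomputable section

/-- The operator (T_±^α g)(x) = (1/Γ(α)) ∫ (xₙ − yₙ)_±^{α−1} g(y', yₙ + x'·y') dy. -/
def Tfrac (n : ℕ) (σ : Bool) (α : ℂ) (g : Rn n → ℂ) (x : Rn n) : ℂ :=
  (1 / Complex.Gamma α) *
    ∫ y : Rn n, ppow σ (x.2 - y.2) (α - 1) * g (y.1, y.2 + (inner ℝ x.1 y.1 : ℝ))

/-- P_±^α f = B₂ T_±^α B₁ f, where (B₁f)(x) = f(x', xₙ − |x'|²) and
(B₂F)(x) = F(2x', xₙ − |x'|²). -/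
theorem parP_eq_B2_T_B1 (n : ℕ) (hn : 2 ≤ n) (σ : Bool)
    (α : ℂ) (hα : 0 < α.re) (f : SchwartzMap (Rn n) ℂ) (x : Rn n) :
    parP n σ α (fun y => f y) x
      = Tfrac n σ α (fun z => f (z.1, z.2 - ‖z.1‖ ^ 2)) ((2 : ℝ) • x.1, x.2 - ‖x.1‖ ^ 2) := by
  classical
  set c : EuclideanSpace ℝ (Fin (n - 1)) → ℝ :=
    fun a => ‖a‖ ^ 2 - (inner ℝ ((2 : ℝ) • x.1) a : ℝ) with hc
  have hccont : Continuous c := by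
    apply Continuous.sub
    · exact (continuous_norm).pow 2
    · exact Continuous.inner continuous_const continuous_id
  -- the shear map
  have hmp : MeasurePreserving (fun y : Rn n => (y.1, y.2 + c y.1))
      (volume : Measure (Rn n)) volume := by
    rw [Measure.volume_eq_prod]
    exact MeasurePreserving.skew_product (g := fun a b => b + c a)
      (MeasurePreserving.id (volume : Measure (EuclideanSpace ℝ (Fin (n - 1)))))
      (measurable_snd.add (hccont.measurable.comp measurable_fst))
      (ae_of_all _ fun a => map_add_right_eq_self volume (c a))
  have hemb : MeasurableEmbedding (fun y : Rn n => (y.1, y.2 + c y.1)) := by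
    let φ : Rn n ≃ₜ Rn n :=
      { toFun := fun y => (y.1, y.2 + c y.1)
        invFun := fun y => (y.1, y.2 - c y.1)
        left_inv := fun y => by simp
        right_inv := fun y => by simp
        continuous_toFun := by fun_prop
        continuous_invFun := by fun_prop }
    exact φ.toMeasurableEquiv.measurableEmbedding
  set G : Rn n → ℂ := fun z =>
    ppow σ (x.2 - ‖x.1‖ ^ 2 - z.2) (α - 1) *
      f (z.1, z.2 + (inner ℝ ((2 : ℝ) • x.1) z.1 : ℝ) - ‖z.1‖ ^ 2) with hG
  unfold parP Tfrac
  congr 1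
  have hsub : MeasurePreserving (fun y : Rn n => x - y)
      (volume : Measure (Rn n)) volume := by
    rw [Measure.volume_eq_prod]
    have ha := Measure.measurePreserving_sub_left
      (volume : Measure (EuclideanSpace ℝ (Fin (n - 1)))) x.1
    have hb := Measure.measurePreserving_sub_left (volume : Measure ℝ) x.2
    exact ha.prod hb
  have hsemb : MeasurableEmbedding (fun y : Rn n => x - y) := by
    let ψ : Rn n ≃ₜ Rn n :=
      { toFun := fun y => x - y
        invFun := fun y => x - y
        left_inv := fun y => by simp
        right_inv := fun y => by simp
        continuous_toFun := by fun_prop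
        continuous_invFun := by fun_prop }
    exact ψ.toMeasurableEquiv.measurableEmbedding
  have h1 : (∫ y : Rn n, ppow σ (y.2 - ‖y.1‖ ^ 2) (α - 1) * f (x - y))
      = ∫ y : Rn n, ppow σ (x.2 - y.2 - ‖x.1 - y.1‖ ^ 2) (α - 1) * f y := by
    have := hsub.integral_comp hsemb
      (fun u : Rn n => ppow σ (x.2 - u.2 - ‖x.1 - u.1‖ ^ 2) (α - 1) * f u)
    simpa [Prod.sub_def, sub_sub_cancel] using this
  have h2 : (∫ y : Rn n, ppow σ (x.2 - y.2 - ‖x.1 - y.1‖ ^ 2) (α - 1) * f y)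
      = ∫ y : Rn n, G (y.1, y.2 + c y.1) := by
    refine integral_congr_ae (ae_of_all _ fun y => ?_)
    have hnorm : ‖x.1 - y.1‖ ^ 2
        = ‖x.1‖ ^ 2 - 2 * (inner ℝ x.1 y.1 : ℝ) + ‖y.1‖ ^ 2 := by
      rw [@norm_sub_sq_real]
    have hinn : (inner ℝ ((2 : ℝ) • x.1) y.1 : ℝ) = 2 * (inner ℝ x.1 y.1 : ℝ) :=
      real_inner_smul_left x.1 y.1 2
    simp only [hG]
    have harg1 : x.2 - y.2 - ‖x.1 - y.1‖ ^ 2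
        = x.2 - ‖x.1‖ ^ 2 - (y.2 + c y.1) := by
      simp only [hc, hinn, hnorm]; ring
    have harg2 : (y.2 + c y.1) + (inner ℝ ((2 : ℝ) • x.1) y.1 : ℝ) - ‖y.1‖ ^ 2 = y.2 := by
      simp only [hc]; ring
    rw [harg1, harg2]
  have h3 : (∫ y : Rn n, G (y.1, y.2 + c y.1)) = ∫ y : Rn n, G y :=
    hmp.integral_comp hemb G
  rw [h1, h2, h3]
end
end

section
/- Let α ∈ ℂ with Re α > 0, let λ₁ > 0 and λ₂ > 0, and let f be a Schwartz function on ℝⁿ. Define (A_λ f)(x) = f(λ₁ x', λ₂ x_n) and (B_λ F)(x) = λ₁^{1−n} exp(−α log λ₂) F((λ₂/λ₁) x', λ₂ x_n). Then for each choice of sign ± and every x ∈ ℝⁿ, (T_±^α (A_λ f))(x) = (B_λ (T_±^α f))(x). -/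
open MeasureTheory Complex

noncomputable section

/-- Determinant of a product map is the product of the determinants. -/
lemma det_prodMap' {E F : Type*} [AddCommGroup E] [Module ℝ E] [FiniteDimensional ℝ E]
    [AddCommGroup F] [Module ℝ F] [FiniteDimensional ℝ F]
    (f : E →ₗ[ℝ] E) (g : F →ₗ[ℝ] F) :
    LinearMap.det (f.prodMap g) = f.det * g.det := by
  classical
  let b₁ := Module.finBasis ℝ E
  let b₂ := Module.finBasis ℝ F
  rw [← LinearMap.det_toMatrix (b₁.prod b₂), LinearMap.toMatrix_prodMap,
    Matrix.det_fromBlocks_zero₂₁, LinearMap.det_toMatrix, LinearMap.det_toMatrix]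

/-- Change of variables (y', yₙ) = (a u', b uₙ) on ℝ^{d} × ℝ. -/
lemma integral_comp_prod_smul {d : ℕ} (g : EuclideanSpace ℝ (Fin d) × ℝ → ℂ)
    {a b : ℝ} (ha : 0 < a) (hb : 0 < b) :
    (∫ y : EuclideanSpace ℝ (Fin d) × ℝ, g y)
      = ((a ^ d * b : ℝ) : ℂ) *
        ∫ u : EuclideanSpace ℝ (Fin d) × ℝ, g (a • u.1, b * u.2) := by
  haveI : (volume : Measure (EuclideanSpace ℝ (Fin d) × ℝ)).IsAddHaarMeasure := by
    rw [show (volume : Measure (EuclideanSpace ℝ (Fin d) × ℝ))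
        = Measure.prod volume volume from rfl]
    infer_instance
  set L : (EuclideanSpace ℝ (Fin d) × ℝ) →ₗ[ℝ] (EuclideanSpace ℝ (Fin d) × ℝ) :=
    (a • LinearMap.id).prodMap (b • LinearMap.id) with hL
  have hdet : LinearMap.det L = a ^ d * b := by
    rw [hL, det_prodMap']
    simp [LinearMap.det_smul]
  have hdpos : 0 < a ^ d * b := mul_pos (pow_pos ha d) hb
  have hdet0 : LinearMap.det L ≠ 0 := by rw [hdet]; exact hdpos.ne'
  set e : (EuclideanSpace ℝ (Fin d) × ℝ) ≃ᵐ (EuclideanSpace ℝ (Fin d) × ℝ) :=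
    ((Homeomorph.smulOfNeZero a ha.ne').prodCongr
      (Homeomorph.smulOfNeZero b hb.ne')).toMeasurableEquiv with he
  have hcoe : ∀ u : EuclideanSpace ℝ (Fin d) × ℝ, e u = L u := by
    intro u
    rfl
  have hmap : (volume : Measure (EuclideanSpace ℝ (Fin d) × ℝ)).map e
      = ENNReal.ofReal |(LinearMap.det L)⁻¹| • volume := by
    rw [show ⇑e = ⇑L from funext hcoe]
    exact Measure.map_linearMap_addHaar_eq_smul_addHaar volume hdet0
  have key : ∫ y, g y ∂((volume : Measure (EuclideanSpace ℝ (Fin d) × ℝ)).map e)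
      = ∫ u, g (e u) := MeasureTheory.integral_map_equiv e g
  rw [hmap, integral_smul_measure] at key
  have habs : |(LinearMap.det L)⁻¹| = (a ^ d * b)⁻¹ := by
    rw [hdet, abs_of_pos (inv_pos.2 hdpos)]
  rw [habs, ENNReal.toReal_ofReal (inv_pos.2 hdpos).le] at key
  have hge : ∀ u : EuclideanSpace ℝ (Fin d) × ℝ, g (e u) = g (a • u.1, b * u.2) := by
    intro u; rw [hcoe]; rfl
  simp only [hge] at key
  have key2 : (((a ^ d * b : ℝ) : ℂ))⁻¹ * ∫ y : EuclideanSpace ℝ (Fin d) × ℝ, g y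
      = ∫ u : EuclideanSpace ℝ (Fin d) × ℝ, g (a • u.1, b * u.2) := by
    rw [← key, Complex.real_smul, Complex.ofReal_inv]
  have hc : ((a ^ d * b : ℝ) : ℂ) ≠ 0 := by
    exact_mod_cast hdpos.ne'
  calc (∫ y : EuclideanSpace ℝ (Fin d) × ℝ, g y)
      = ((a ^ d * b : ℝ) : ℂ) *
          ((((a ^ d * b : ℝ) : ℂ))⁻¹ * ∫ y : EuclideanSpace ℝ (Fin d) × ℝ, g y) := by
        rw [← mul_assoc, mul_inv_cancel₀ hc, one_mul]
    _ = _ := by rw [key2]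

/-- Scaling of `ppow` by a positive constant. -/
lemma ppow_const_mul (σ : Bool) {c : ℝ} (hc : 0 < c) (t : ℝ) (l : ℂ) :
    ppow σ (c * t) l = Complex.exp (l * Real.log c) * ppow σ t l := by
  rcases σ with _ | _
  · simp only [ppow, Bool.false_eq_true, if_false]
    by_cases ht : t < 0
    · have h1 : c * t < 0 := mul_neg_of_pos_of_neg hc ht
      rw [if_pos ht, if_pos h1, ← Complex.exp_add, ← mul_add]
      congr 2
      rw [show -(c * t) = c * (-t) by ring, Real.log_mul hc.ne' (by linarith)]
      push_cast
      ring
    · have h1 : ¬ (c * t < 0) := by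
        rcases lt_or_ge t 0 with h | h
        · exact absurd h ht
        · exact not_lt.2 (mul_nonneg hc.le h)
      rw [if_neg ht, if_neg h1, mul_zero]
  · simp only [ppow, if_true]
    by_cases ht : 0 < t
    · have h1 : 0 < c * t := mul_pos hc ht
      rw [if_pos ht, if_pos h1, ← Complex.exp_add, ← mul_add]
      congr 2
      rw [Real.log_mul hc.ne' ht.ne']
      push_cast
      ring
    · have h1 : ¬ (0 < c * t) := by
        rcases lt_or_ge 0 t with h | h
        · exact absurd h ht
        · exact not_lt.2 (mul_nonpos_of_nonneg_of_nonpos hc.le h)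
      rw [if_neg ht, if_neg h1, mul_zero]

/-- Scaling identity: T_±^α (A_λ f) = B_λ (T_±^α f), where (A_λ f)(x) = f(λ₁x', λ₂xₙ)
and (B_λ F)(x) = λ₁^{1−n} λ₂^{−α} F((λ₂/λ₁)x', λ₂xₙ). -/
theorem Tfrac_scaling (n : ℕ) (hn : 2 ≤ n) (σ : Bool)
    (α : ℂ) (hα : 0 < α.re) (l₁ l₂ : ℝ) (h1 : 0 < l₁) (h2 : 0 < l₂)
    (f : SchwartzMap (Rn n) ℂ) (x : Rn n) :
    Tfrac n σ α (fun z => f (l₁ • z.1, l₂ * z.2)) x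
      = ((l₁ ^ ((1 : ℝ) - n) : ℝ) : ℂ) * Complex.exp (-α * Real.log l₂) *
          Tfrac n σ α (fun y => f y) ((l₂ / l₁) • x.1, l₂ * x.2) := by
  unfold Tfrac
  -- change of variables in the integral on the right
  rw [integral_comp_prod_smul
    (fun y : Rn n => ppow σ (((l₂ / l₁) • x.1, l₂ * x.2).2 - y.2) (α - 1) *
      f (y.1, y.2 + (inner ℝ ((l₂ / l₁) • x.1, l₂ * x.2).1 y.1 : ℝ))) h1 h2]
  -- simplify the transformed integrand
  have integrand_eq : ∀ u : Rn n,
      ppow σ (((l₂ / l₁) • x.1, l₂ * x.2).2 - l₂ * u.2) (α - 1) *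
        f (l₁ • u.1, l₂ * u.2 + (inner ℝ ((l₂ / l₁) • x.1, l₂ * x.2).1 (l₁ • u.1) : ℝ))
      = Complex.exp ((α - 1) * Real.log l₂) *
        (ppow σ (x.2 - u.2) (α - 1) *
          f (l₁ • u.1, l₂ * (u.2 + (inner ℝ x.1 u.1 : ℝ)))) := by
    intro u
    have hinner : (inner ℝ ((l₂ / l₁) • x.1) (l₁ • u.1) : ℝ) = l₂ * (inner ℝ x.1 u.1 : ℝ) := by
      rw [real_inner_smul_left, real_inner_smul_right]
      field_simp
    have harg : l₂ * u.2 + (inner ℝ ((l₂ / l₁) • x.1) (l₁ • u.1) : ℝ)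
        = l₂ * (u.2 + (inner ℝ x.1 u.1 : ℝ)) := by
      rw [hinner]; ring
    have hppow : ppow σ (l₂ * x.2 - l₂ * u.2) (α - 1)
        = Complex.exp ((α - 1) * Real.log l₂) * ppow σ (x.2 - u.2) (α - 1) := by
      rw [show l₂ * x.2 - l₂ * u.2 = l₂ * (x.2 - u.2) by ring, ppow_const_mul σ h2]
    simp only [harg]
    rw [show (((l₂ / l₁) • x.1, l₂ * x.2) : Rn n).2 - l₂ * u.2 = l₂ * x.2 - l₂ * u.2 from rfl,
      hppow]
    ring
  simp only [integrand_eq]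
  rw [integral_const_mul]
  -- now it is an identity of constants
  have hn1 : (1 : ℕ) ≤ n := le_trans one_le_two hn
  have hr : (l₁ ^ ((1 : ℝ) - n) : ℝ) * (l₁ ^ (n - 1) : ℝ) = 1 := by
    rw [← Real.rpow_natCast l₁ (n - 1), ← Real.rpow_add h1]
    rw [show ((1 : ℝ) - n) + ((n - 1 : ℕ) : ℝ) = 0 by
      rw [Nat.cast_sub hn1]; push_cast; ring]
    exact Real.rpow_zero l₁
  have hrC : ((l₁ ^ ((1 : ℝ) - n) : ℝ) : ℂ) * ((l₁ ^ (n - 1) : ℝ) : ℂ) = 1 := by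
    rw [← Complex.ofReal_mul, hr, Complex.ofReal_one]
  have hexp : Complex.exp (-α * Real.log l₂) * Complex.exp ((α - 1) * Real.log l₂)
      = (l₂ : ℂ)⁻¹ := by
    rw [← Complex.exp_add, show -α * (Real.log l₂ : ℂ) + (α - 1) * (Real.log l₂ : ℂ)
      = -(Real.log l₂ : ℂ) by ring, Complex.exp_neg]
    congr 1
    rw [← Complex.ofReal_exp, Real.exp_log h2]
  have hl₂ : (l₂ : ℂ) ≠ 0 := by exact_mod_cast h2.ne'
  have hconst : ((l₁ ^ ((1 : ℝ) - n) : ℝ) : ℂ) * Complex.exp (-α * Real.log l₂) *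
      ((l₁ ^ (n - 1) * l₂ : ℝ) : ℂ) * Complex.exp ((α - 1) * Real.log l₂) = 1 := by
    rw [Complex.ofReal_mul]
    calc ((l₁ ^ ((1 : ℝ) - n) : ℝ) : ℂ) * Complex.exp (-α * Real.log l₂) *
          (((l₁ ^ (n - 1) : ℝ) : ℂ) * (l₂ : ℂ)) * Complex.exp ((α - 1) * Real.log l₂)
        = (((l₁ ^ ((1 : ℝ) - n) : ℝ) : ℂ) * ((l₁ ^ (n - 1) : ℝ) : ℂ)) *
            ((l₂ : ℂ) * (Complex.exp (-α * Real.log l₂) *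
              Complex.exp ((α - 1) * Real.log l₂))) := by ring
      _ = 1 := by rw [hrC, hexp, mul_inv_cancel₀ hl₂, one_mul]
  linear_combination
    (-((Complex.Gamma α)⁻¹ : ℂ) *
      ∫ y : Rn n, ppow σ (x.2 - y.2) (α - 1) *
        f (l₁ • y.1, l₂ * (y.2 + (inner ℝ x.1 y.1 : ℝ)))) * hconst
end
end
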